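/- arXiv:2402.14794 — 5 statements merged into one kernel-verified Lean document; each statement's English description precedes it below -/
import Mathlib

section
/- Let A be a unital C*-algebra, α a one-parameter group of *-automorphisms of A, and ω a state on A with GNS data (π, H, Ω). Assume Ω is separating for the double commutant M = π(A)'' and that (A, α, ω) is mixing. Then for every a ∈ A, the operators π(α_t(a)) converge to ω(a)·1 in the weak operator topology on B(H), both as t → +∞ and as t → −∞. -/
open Filter
open scoped ComplexOrder ComplexInnerProductSpace

/-- Convergence in the weak operator topology along a filter. -/
def WOTTendsto {H : Type*} [NormedAddCommGroup H] [InnerProductSpace ℂ H]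
    (T : ℝ → (H →L[ℂ] H)) (l : Filter ℝ) (S : H →L[ℂ] H) : Prop :=
  ∀ v w : H, Tendsto (fun t => ⟪v, T t w⟫) l (nhds ⟪v, S w⟫)

/-- Extension of pointwise convergence from a dense submodule, given a uniform
Lipschitz bound. -/
lemma dense_ext {H : Type*} [NormedAddCommGroup H] [InnerProductSpace ℂ H]
    (l : Filter ℝ) (f : ℝ → H → ℂ) (g : H → ℂ) (C : ℝ) (hC : 0 ≤ C)
    (hf : ∀ t w w', ‖f t w - f t w'‖ ≤ C * ‖w - w'‖)
    (hg : ∀ w w', ‖g w - g w'‖ ≤ C * ‖w - w'‖)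
    (D : Submodule ℂ H) (hD : D.topologicalClosure = ⊤)
    (h : ∀ w ∈ D, Tendsto (fun t => f t w) l (nhds (g w))) :
    ∀ w, Tendsto (fun t => f t w) l (nhds (g w)) := by
  intro w
  rw [Metric.tendsto_nhds]
  intro ε hε
  have hwcl : w ∈ closure (D : Set H) := by
    rw [← Submodule.topologicalClosure_coe, hD]; trivial
  have hδ : 0 < ε / 3 / (C + 1) := by positivity
  obtain ⟨w', hw', hdist⟩ := Metric.mem_closure_iff.mp hwcl _ hδ
  have hCd : C * ‖w - w'‖ < ε / 3 := by
    calc C * ‖w - w'‖ ≤ (C + 1) * ‖w - w'‖ := by nlinarith [norm_nonneg (w - w')]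
    _ < (C + 1) * (ε / 3 / (C + 1)) := by
        have := hdist
        rw [dist_eq_norm] at this
        exact mul_lt_mul_of_pos_left this (by positivity)
    _ = ε / 3 := by field_simp
  filter_upwards [Metric.tendsto_nhds.mp (h w' hw') (ε / 3) (by positivity)] with t ht
  have h1 : dist (f t w) (f t w') < ε / 3 := by
    rw [dist_eq_norm]; exact lt_of_le_of_lt (hf t w w') hCd
  have h3 : dist (g w') (g w) < ε / 3 := by
    rw [dist_eq_norm]
    calc ‖g w' - g w‖ ≤ C * ‖w' - w‖ := hg w' w
    _ = C * ‖w - w'‖ := by rw [norm_sub_rev]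
    _ < ε / 3 := hCd
  calc dist (f t w) (g w) ≤ dist (f t w) (f t w') + dist (f t w') (g w') + dist (g w') (g w) :=
        dist_triangle4 _ _ _ _
  _ < ε / 3 + ε / 3 + ε / 3 := by gcongr
  _ = ε := by ring


lemma dense_commutant_orbit {H : Type*} [NormedAddCommGroup H] [InnerProductSpace ℂ H]
    [CompleteSpace H] (S : Set (H →L[ℂ] H)) (hSstar : ∀ X ∈ S, star X ∈ S) (Ω : H)
    (hsep : ∀ X ∈ Set.centralizer (Set.centralizer S), X Ω = 0 → X = 0) :
    (Submodule.span ℂ ((fun X : H →L[ℂ] H => X Ω) '' Set.centralizer S)).topologicalClosure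
      = ⊤ := by
  set D := Submodule.span ℂ ((fun X : H →L[ℂ] H => X Ω) '' Set.centralizer S) with hDdef
  set K := D.topologicalClosure with hKdef
  haveI : CompleteSpace K := D.isClosed_topologicalClosure.completeSpace_coe
  set P : H →L[ℂ] H := K.subtypeL ∘L K.orthogonalProjectionOnto with hPdef
  have hPsa : IsSelfAdjoint P := isSelfAdjoint_starProjection K
  have hPK : ∀ x : H, P x ∈ K := fun x => (K.orthogonalProjectionOnto x).2
  have hPfix : ∀ x ∈ K, P x = x := by
    intro x hx
    simpa [hPdef] using (Submodule.starProjection_eq_self_iff (K := K)).mpr hx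
  have hstarc : ∀ X ∈ Set.centralizer S, star X ∈ Set.centralizer S := by
    intro X hX m hm
    have h := hX (star m) (hSstar m hm)
    calc m * star X = star (X * star m) := by simp [star_mul]
    _ = star (star m * X) := by rw [h]
    _ = star X * m := by simp [star_mul]
  have hinvK : ∀ X ∈ Set.centralizer S, ∀ x ∈ K, X x ∈ K := by
    intro X hX x hx
    have hD : ∀ y ∈ D, X y ∈ D := by
      intro y hy
      induction hy using Submodule.span_induction with
      | mem z hz =>
          obtain ⟨Y, hY, rfl⟩ := hz
          refine Submodule.subset_span ⟨X * Y, Set.mul_mem_centralizer hX hY, ?_⟩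
          simp [ContinuousLinearMap.mul_apply]
      | zero => simp
      | add y z _ _ hy hz => rw [map_add]; exact D.add_mem hy hz
      | smul c y _ hy => rw [map_smul]; exact D.smul_mem c hy
    have hx' : x ∈ closure (D : Set H) := by rwa [← Submodule.topologicalClosure_coe]
    have : X x ∈ closure (X '' (D : Set H)) :=
      (image_closure_subset_closure_image X.continuous) ⟨x, hx', rfl⟩
    have hsub : X '' (D : Set H) ⊆ (D : Set H) := by
      rintro _ ⟨y, hy, rfl⟩; exact hD y hy
    rw [hKdef, ← SetLike.mem_coe, Submodule.topologicalClosure_coe]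
    exact closure_mono hsub this
  have key : ∀ X ∈ Set.centralizer S, P * X * P = X * P := by
    intro X hX
    ext x
    simp only [ContinuousLinearMap.mul_apply]
    exact hPfix _ (hinvK X hX _ (hPK x))
  have hcomm : ∀ X ∈ Set.centralizer S, X * P = P * X := by
    intro X hX
    have h1 := key X hX
    have h2 := key (star X) (hstarc X hX)
    have h3 : P * X * P = P * X := by
      have := congrArg star h2
      simpa [star_mul, hPsa.star_eq, mul_assoc] using this
    rw [← h1, h3]
  have hΩK : Ω ∈ K :=
    D.le_topologicalClosure (Submodule.subset_span ⟨1, Set.one_mem_centralizer, rfl⟩)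
  have h1P : ((1 : H →L[ℂ] H) - P) Ω = 0 := by
    simp [ContinuousLinearMap.sub_apply, hPfix Ω hΩK]
  have hmem : (1 : H →L[ℂ] H) - P ∈ Set.centralizer (Set.centralizer S) := by
    intro m hm
    rw [mul_sub, sub_mul, mul_one, one_mul, hcomm m hm]
  have hP1 : (1 : H →L[ℂ] H) - P = 0 := hsep _ hmem h1P
  rw [eq_top_iff]
  intro x _
  have : P x = x := by
    have := congrFun (congrArg DFunLike.coe hP1) x
    simp only [ContinuousLinearMap.sub_apply, ContinuousLinearMap.one_apply,
      ContinuousLinearMap.zero_apply, sub_eq_zero] at this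
    exact this.symm
  rw [← this]
  exact hPK x

section aux

lemma pi_contr {A : Type*} [CStarAlgebra A]
    {H : Type*} [NormedAddCommGroup H] [InnerProductSpace ℂ H] [CompleteSpace H]
    (π : A →⋆ₐ[ℂ] (H →L[ℂ] H)) (x : A) : ‖π x‖ ≤ ‖x‖ :=
  NonUnitalStarAlgHom.norm_apply_le π x

lemma alpha_norm' {A : Type*} [CStarAlgebra A] (α : A ≃⋆ₐ[ℂ] A) (x : A) : ‖α x‖ = ‖x‖ :=
  StarAlgEquiv.norm_map α x

variable {A : Type*} [NormedRing A] [StarRing A] [CStarRing A] [CompleteSpace A]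
    [NormedAlgebra ℂ A] [StarModule ℂ A]
    {H : Type*} [NormedAddCommGroup H] [InnerProductSpace ℂ H] [CompleteSpace H]

lemma pi_contractive (π : A →⋆ₐ[ℂ] (H →L[ℂ] H)) (x : A) : ‖π x‖ ≤ ‖x‖ := by
  letI : CStarAlgebra A := ⟨⟩
  exact pi_contr π x

lemma alpha_norm (α : A ≃⋆ₐ[ℂ] A) (x : A) : ‖α x‖ = ‖x‖ := by
  letI : CStarAlgebra A := ⟨⟩
  exact alpha_norm' α x

omit [CStarRing A] [CompleteSpace A] [StarModule ℂ A] in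
lemma omega_star (ω : A →ₗ[ℂ] ℂ) (π : A →⋆ₐ[ℂ] (H →L[ℂ] H)) (Ω : H)
    (hrep : ∀ a : A, ω a = ⟪Ω, π a Ω⟫) (x : A) :
    ω (star x) = (starRingEnd ℂ) (ω x) := by
  rw [hrep, hrep, map_star, ContinuousLinearMap.star_eq_adjoint,
    ContinuousLinearMap.adjoint_inner_right, ← inner_conj_symm]

omit [CStarRing A] [CompleteSpace A] [StarModule ℂ A] in
lemma inner_pi_left (π : A →⋆ₐ[ℂ] (H →L[ℂ] H)) (Ω : H) (c : A) (z : H) :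
    ⟪π c Ω, z⟫ = ⟪Ω, π (star c) z⟫ := by
  rw [map_star, ContinuousLinearMap.star_eq_adjoint, ContinuousLinearMap.adjoint_inner_right]

end aux

lemma key_conv
    {A : Type*} [NormedRing A] [StarRing A] [CStarRing A] [CompleteSpace A]
    [NormedAlgebra ℂ A] [StarModule ℂ A]
    {H : Type*} [NormedAddCommGroup H] [InnerProductSpace ℂ H] [CompleteSpace H]
    (α : ℝ → (A ≃⋆ₐ[ℂ] A)) (ω : A →ₗ[ℂ] ℂ)
    (π : A →⋆ₐ[ℂ] (H →L[ℂ] H)) (Ω : H) (hΩnorm : ‖Ω‖ = 1)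
    (hrep : ∀ a : A, ω a = ⟪Ω, π a Ω⟫)
    (hcyc : (Submodule.span ℂ (Set.range fun b : A => π b Ω)).topologicalClosure = ⊤)
    (hsep : ∀ X ∈ Set.centralizer (Set.centralizer (Set.range fun b : A => π b)),
        X Ω = 0 → X = 0)
    (l : Filter ℝ)
    (hmixl : ∀ a b : A, Filter.Tendsto (fun t => ω (b * α t a)) l (nhds (ω a * ω b)))
    (a : A) :
    ∀ v w : H, Tendsto (fun t => ⟪v, π (α t a) w⟫) l (nhds (ω a * ⟪v, w⟫)) := by
  have hT : ∀ t : ℝ, ‖π (α t a)‖ ≤ ‖a‖ := fun t =>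
    (pi_contractive π (α t a)).trans_eq (alpha_norm (α t) a)
  have hωn : ‖ω a‖ ≤ ‖a‖ := by
    rw [hrep]
    calc ‖⟪Ω, π a Ω⟫‖ ≤ ‖Ω‖ * ‖π a Ω‖ := norm_inner_le_norm _ _
    _ ≤ ‖Ω‖ * (‖π a‖ * ‖Ω‖) := by gcongr; exact (π a).le_opNorm Ω
    _ ≤ 1 * (‖a‖ * 1) := by
        rw [hΩnorm]; gcongr <;> simp [pi_contractive π a]
    _ = ‖a‖ := by ring
  -- Step 1 : weak convergence of `π (α t a) Ω` to `ω a • Ω`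
  have hΩconv : ∀ v : H, Tendsto (fun t => ⟪v, π (α t a) Ω⟫) l (nhds (ω a * ⟪v, Ω⟫)) := by
    have hbase : ∀ v ∈ Submodule.span ℂ (Set.range fun b : A => π b Ω),
        Tendsto (fun t => ⟪v, π (α t a) Ω⟫) l (nhds (ω a * ⟪v, Ω⟫)) := by
      intro v hv
      induction hv using Submodule.span_induction with
      | mem z hz =>
          obtain ⟨c, rfl⟩ := hz
          have heq : ∀ t : ℝ, ⟪π c Ω, π (α t a) Ω⟫ = ω (star c * α t a) := by
            intro t
            rw [inner_pi_left π Ω c, ← ContinuousLinearMap.mul_apply, ← map_mul, ← hrep]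
          have heq2 : ⟪π c Ω, Ω⟫ = ω (star c) := by
            rw [inner_pi_left π Ω c, ← hrep]
          simp only [heq, heq2]
          exact hmixl a (star c)
      | zero => simpa using tendsto_const_nhds
      | add y z _ _ hy hz =>
          simp only [inner_add_left, mul_add]
          exact hy.add hz
      | smul c y _ hy =>
          simp only [inner_smul_left]
          have := hy.const_mul ((starRingEnd ℂ) c)
          convert this using 2 <;> ring
    refine dense_ext l (fun t v => ⟪v, π (α t a) Ω⟫) (fun v => ω a * ⟪v, Ω⟫) ‖a‖
      (norm_nonneg a) ?_ ?_ _ hcyc hbase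
    · intro t v v'
      rw [← inner_sub_left]
      calc ‖⟪v - v', π (α t a) Ω⟫‖ ≤ ‖v - v'‖ * ‖π (α t a) Ω‖ := norm_inner_le_norm _ _
      _ ≤ ‖v - v'‖ * (‖π (α t a)‖ * ‖Ω‖) := by gcongr; exact (π (α t a)).le_opNorm Ω
      _ ≤ ‖v - v'‖ * (‖a‖ * 1) := by rw [hΩnorm]; gcongr; exact hT t
      _ = ‖a‖ * ‖v - v'‖ := by ring
    · intro v v'
      rw [← mul_sub, ← inner_sub_left, norm_mul]
      calc ‖ω a‖ * ‖⟪v - v', Ω⟫‖ ≤ ‖a‖ * (‖v - v'‖ * ‖Ω‖) := by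
            gcongr; exact norm_inner_le_norm _ _
      _ = ‖a‖ * ‖v - v'‖ := by rw [hΩnorm, mul_one]
  -- Step 2 : extend to arbitrary second argument using the commutant
  intro v
  have hdense := dense_commutant_orbit (Set.range fun b : A => π b)
    (by rintro _ ⟨b, rfl⟩; exact ⟨star b, by simp [map_star]⟩) Ω hsep
  have hbase2 : ∀ w ∈ Submodule.span ℂ
      ((fun X : H →L[ℂ] H => X Ω) '' Set.centralizer (Set.range fun b : A => π b)),
      Tendsto (fun t => ⟪v, π (α t a) w⟫) l (nhds (ω a * ⟪v, w⟫)) := by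
    intro w hw
    induction hw using Submodule.span_induction with
    | mem z hz =>
        obtain ⟨X, hX, rfl⟩ := hz
        have heq : ∀ t : ℝ, ⟪v, π (α t a) (X Ω)⟫
            = ⟪ContinuousLinearMap.adjoint X v, π (α t a) Ω⟫ := by
          intro t
          have hc : π (α t a) * X = X * π (α t a) := hX (π (α t a)) ⟨α t a, rfl⟩
          have hce : π (α t a) (X Ω) = X (π (α t a) Ω) := by
            have := congrFun (congrArg DFunLike.coe hc) Ω
            simpa [ContinuousLinearMap.mul_apply] using this
          rw [hce, ContinuousLinearMap.adjoint_inner_left]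
        have heq2 : ⟪ContinuousLinearMap.adjoint X v, Ω⟫ = ⟪v, X Ω⟫ :=
          ContinuousLinearMap.adjoint_inner_left X Ω v
        simp only [heq]
        rw [← heq2]
        exact hΩconv (ContinuousLinearMap.adjoint X v)
    | zero => simpa using tendsto_const_nhds
    | add y z _ _ hy hz =>
        simp only [inner_add_right, map_add, mul_add]
        exact hy.add hz
    | smul c y _ hy =>
        simp only [map_smul, inner_smul_right]
        have := hy.const_mul c
        convert this using 2 <;> ring
  refine dense_ext l (fun t w => ⟪v, π (α t a) w⟫) (fun w => ω a * ⟪v, w⟫) (‖a‖ * ‖v‖)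
    (by positivity) ?_ ?_ _ hdense hbase2
  · intro t w w'
    show ‖⟪v, π (α t a) w⟫ - ⟪v, π (α t a) w'⟫‖ ≤ ‖a‖ * ‖v‖ * ‖w - w'‖
    rw [← inner_sub_right, ← map_sub]
    calc ‖⟪v, π (α t a) (w - w')⟫‖ ≤ ‖v‖ * ‖π (α t a) (w - w')‖ := norm_inner_le_norm _ _
    _ ≤ ‖v‖ * (‖π (α t a)‖ * ‖w - w'‖) := by gcongr; exact (π (α t a)).le_opNorm _
    _ ≤ ‖v‖ * (‖a‖ * ‖w - w'‖) := by gcongr; exact hT t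
    _ = ‖a‖ * ‖v‖ * ‖w - w'‖ := by ring
  · intro w w'
    show ‖ω a * ⟪v, w⟫ - ω a * ⟪v, w'⟫‖ ≤ ‖a‖ * ‖v‖ * ‖w - w'‖
    rw [← mul_sub, ← inner_sub_right, norm_mul]
    calc ‖ω a‖ * ‖⟪v, w - w'⟫‖ ≤ ‖a‖ * (‖v‖ * ‖w - w'‖) := by
          gcongr; exact norm_inner_le_norm _ _
    _ = ‖a‖ * ‖v‖ * ‖w - w'‖ := by ring

/-- If `ω` is a state on a unital C*-algebra `A` with GNS data `(π, H, Ω)`,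
`Ω` is separating for the double commutant `M = π(A)''`, and `(A, α, ω)` is mixing, then for
every `a ∈ A` the operators `π (α t a)` converge to `ω a • 1` in the weak operator topology,
both as `t → +∞` and as `t → -∞`. -/
theorem stmt0
    {A : Type*} [NormedRing A] [StarRing A] [CStarRing A] [CompleteSpace A]
    [NormedAlgebra ℂ A] [StarModule ℂ A]
    {H : Type*} [NormedAddCommGroup H] [InnerProductSpace ℂ H] [CompleteSpace H]
    -- one-parameter group of *-automorphisms
    (α : ℝ → (A ≃⋆ₐ[ℂ] A))
    (hα0 : ∀ a : A, α 0 a = a)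
    (hαadd : ∀ s t : ℝ, ∀ a : A, α (s + t) a = α s (α t a))
    -- state
    (ω : A →ₗ[ℂ] ℂ)
    (hω1 : ω 1 = 1)
    (hωpos : ∀ a : A, 0 ≤ ω (star a * a))
    -- GNS data
    (π : A →⋆ₐ[ℂ] (H →L[ℂ] H)) (Ω : H) (hΩnorm : ‖Ω‖ = 1)
    (hrep : ∀ a : A, ω a = ⟪Ω, π a Ω⟫)
    (hcyc : (Submodule.span ℂ (Set.range fun b : A => π b Ω)).topologicalClosure = ⊤)
    -- Ω separating for M = π(A)''
    (hsep : ∀ X ∈ Set.centralizer (Set.centralizer (Set.range fun b : A => π b)),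
        X Ω = 0 → X = 0)
    -- mixing
    (hinv : ∀ t : ℝ, ∀ a : A, ω (α t a) = ω a)
    (hmix : ∀ a b : A, Tendsto (fun t => ω (b * α t a)) atTop (nhds (ω a * ω b))) :
    ∀ a : A,
      WOTTendsto (fun t => π (α t a)) atTop (ω a • (1 : H →L[ℂ] H)) ∧
      WOTTendsto (fun t => π (α t a)) atBot (ω a • (1 : H →L[ℂ] H)) := by
  have hstar : ∀ x : A, ω (star x) = (starRingEnd ℂ) (ω x) := omega_star ω π Ω hrep
  have hrev : ∀ a b : A, Tendsto (fun s => ω (α s b * a)) atTop (nhds (ω a * ω b)) := by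
    intro a b
    have heq : ∀ s : ℝ, ω (α s b * a) = (starRingEnd ℂ) (ω (star a * α s (star b))) := by
      intro s
      rw [← hstar]
      congr 1
      simp [star_mul, map_star]
    have h2 := ((Complex.continuous_conj.tendsto _).comp (hmix (star b) (star a)))
    simp only [Function.comp_def] at h2
    have hval : (starRingEnd ℂ) (ω (star b) * ω (star a)) = ω a * ω b := by
      rw [hstar, hstar, map_mul]
      simp [mul_comm]
    rw [hval] at h2
    simpa only [heq] using h2
  have hmixbot : ∀ a b : A, Tendsto (fun t => ω (b * α t a)) atBot (nhds (ω a * ω b)) := by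
    intro a b
    have heq : ∀ t : ℝ, ω (b * α t a) = ω (α (-t) b * a) := by
      intro t
      rw [← hinv (-t) (b * α t a), map_mul]
      congr 1
      rw [← hαadd, neg_add_cancel, hα0]
    simp only [heq]
    exact (hrev a b).comp tendsto_neg_atBot_atTop
  intro a
  have hsw : ∀ v w : H, ⟪v, (ω a • (1 : H →L[ℂ] H)) w⟫ = ω a * ⟪v, w⟫ := by
    intro v w
    simp [inner_smul_right]
  constructor
  · intro v w
    rw [hsw]
    exact key_conv α ω π Ω hΩnorm hrep hcyc hsep atTop hmix a v w
  · intro v w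
    rw [hsw]
    exact key_conv α ω π Ω hΩnorm hrep hcyc hsep atBot hmixbot a v w
end

section
/- Let H be a complex Hilbert space and M ⊆ B(H) a von Neumann algebra that is the weak-operator closure (equivalently the double commutant) of a unital *-subalgebra N ⊆ M. Let Ψ_φ and Ψ_ψ be unit vectors in H defining the vector states φ = ⟪Ψ_φ, (·) Ψ_φ⟫ and ψ = ⟪Ψ_ψ, (·) Ψ_ψ⟫ on M. Let γ^φ and γ^ψ be one-parameter groups of *-automorphisms of M that commute (γ^φ_t ∘ γ^ψ_s = γ^ψ_s ∘ γ^φ_t for all s, t), with φ invariant under γ^φ and ψ invariant under γ^ψ. Assume that for every X ∈ N: every WOT cluster point of (γ^φ_t X) as t → +∞ and as t → −∞ is a scalar multiple of the identity; every WOT cluster point of (γ^ψ_t X) as t → +∞ and as t → −∞ is a scalar multiple of the identity; there exists a WOT cluster point of each of these nets; and every WOT cluster point of (γ^ψ_{−t}(γ^φ_t X)) as t → +∞ exists and is a scalar multiple of the identity. Then for all X ∈ N, γ^φ_t X → φ(X)·1 and γ^ψ_t X → ψ(X)·1 in the weak operator topology as t → ±∞, and φ(X) = ψ(X) for every X ∈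 M. -/
open Filter
open scoped ComplexInnerProductSpace

/-- `S` is a cluster point of the net `T` along the filter `l` in the weak operator topology
(the topology of pointwise convergence of the sesquilinear forms `(v, w) ↦ ⟪v, T w⟫`). -/
def IsWOTClusterPt {H : Type*} [NormedAddCommGroup H] [InnerProductSpace ℂ H]
    (S : H →L[ℂ] H) (l : Filter ℝ) (T : ℝ → (H →L[ℂ] H)) : Prop :=
  MapClusterPt (fun v w : H => ⟪v, S w⟫) l (fun t => fun v w : H => ⟪v, T t w⟫)

/-! ### Auxiliary material -/

section Aux

set_option linter.unusedSectionVars false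

lemma vNa_isClosed_centralizer {A : Type*} [NormedRing A] (s : Set A) :
    IsClosed (Set.centralizer s) := by
  have : Set.centralizer s = ⋂ m ∈ s, {x | m * x = x * m} := by
    ext x; simp [Set.mem_centralizer_iff]
  rw [this]
  exact isClosed_biInter fun m _ =>
    isClosed_eq (continuous_const.mul continuous_id) (continuous_id.mul continuous_const)

variable {H : Type*} [NormedAddCommGroup H] [InnerProductSpace ℂ H] [CompleteSpace H]

/-- Every bounded sesquilinear form is represented by an operator. -/
lemma vNa_exists_op_of_form (f : H → H → ℂ) (C : ℝ) (hC : 0 ≤ C)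
    (haddr : ∀ v w w', f v (w + w') = f v w + f v w')
    (hsmulr : ∀ (c : ℂ) v w, f v (c • w) = c * f v w)
    (haddl : ∀ v v' w, f (v + v') w = f v w + f v' w)
    (hsmull : ∀ (c : ℂ) v w, f (c • v) w = (starRingEnd ℂ) c * f v w)
    (hbound : ∀ v w, ‖f v w‖ ≤ C * ‖v‖ * ‖w‖) :
    ∃ S : H →L[ℂ] H, ∀ v w, ⟪v, S w⟫ = f v w := by
  classical
  have key : ∀ w : H, ∃ u : H, ∀ v, ⟪v, u⟫ = f v w := by
    intro w
    let g : H →ₗ[ℂ] ℂ :=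
      { toFun := fun v => (starRingEnd ℂ) (f v w)
        map_add' := fun v v' => by simp [haddl]
        map_smul' := fun c v => by simp [hsmull] }
    have hgb : ∀ v, ‖g v‖ ≤ (C * ‖w‖) * ‖v‖ := by
      intro v
      simp only [g, LinearMap.coe_mk, AddHom.coe_mk, RCLike.norm_conj]
      calc ‖f v w‖ ≤ C * ‖v‖ * ‖w‖ := hbound v w
        _ = (C * ‖w‖) * ‖v‖ := by ring
    let gc : H →L[ℂ] ℂ := g.mkContinuous _ hgb
    refine ⟨(InnerProductSpace.toDual ℂ H).symm gc, fun v => ?_⟩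
    have : ⟪(InnerProductSpace.toDual ℂ H).symm gc, v⟫ = gc v :=
      InnerProductSpace.toDual_symm_apply
    rw [← inner_conj_symm, this]
    simp [gc, g, LinearMap.mkContinuous_apply]
  choose S0 hS0 using key
  have hadd : ∀ w w', S0 (w + w') = S0 w + S0 w' := by
    intro w w'
    refine ext_inner_left ℂ fun v => ?_
    rw [hS0, inner_add_right, hS0, hS0, haddr]
  have hsmul : ∀ (c : ℂ) w, S0 (c • w) = c • S0 w := by
    intro c w
    refine ext_inner_left ℂ fun v => ?_
    rw [hS0, inner_smul_right, hS0, hsmulr]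
  have hSb : ∀ w, ‖S0 w‖ ≤ C * ‖w‖ := by
    intro w
    rcases eq_or_ne (S0 w) 0 with h | h
    · simp [h]; positivity
    · have h1 : ‖S0 w‖ * ‖S0 w‖ ≤ (C * ‖w‖) * ‖S0 w‖ := by
        have heq : (⟪S0 w, S0 w⟫ : ℂ) = f (S0 w) w := hS0 w (S0 w)
        have h2 : ‖(⟪S0 w, S0 w⟫ : ℂ)‖ ≤ C * ‖S0 w‖ * ‖w‖ := heq ▸ hbound _ _
        rw [inner_self_eq_norm_sq_to_K] at h2
        rw [norm_pow] at h2
        calc ‖S0 w‖ * ‖S0 w‖ = ‖(‖S0 w‖ : ℂ)‖ ^ 2 := by simp [sq]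
          _ ≤ C * ‖S0 w‖ * ‖w‖ := by simpa using h2
          _ = (C * ‖w‖) * ‖S0 w‖ := by ring
      exact le_of_mul_le_mul_right h1 (norm_pos_iff.mpr h)
  let S : H →ₗ[ℂ] H := { toFun := S0, map_add' := hadd, map_smul' := hsmul }
  exact ⟨S.mkContinuous C hSb, fun v w => hS0 w v⟩

/-- Pinning: the value of a WOT cluster point at a coordinate where the net converges. -/
lemma vNa_clusterPt_coord {S : H →L[ℂ] H} {l : Filter ℝ} [l.NeBot] {T : ℝ → (H →L[ℂ] H)}
    (h : IsWOTClusterPt S l T) {v w : H} {a : ℂ}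
    (hconv : Tendsto (fun t => ⟪v, T t w⟫) l (nhds a)) : ⟪v, S w⟫ = a := by
  obtain ⟨U, hUl, hU⟩ := mapClusterPt_iff_ultrafilter.mp h
  have h1 : Tendsto (fun t => ⟪v, T t w⟫) U (nhds ⟪v, S w⟫) :=
    tendsto_pi_nhds.mp (tendsto_pi_nhds.mp hU v) w
  exact tendsto_nhds_unique h1 (hconv.mono_left hUl)

/-- A uniformly bounded net of operators all of whose WOT cluster points equal `A`
converges to `A` in the weak operator topology. -/
lemma vNa_wotTendsto_of_unique (T : ℝ → (H →L[ℂ] H)) (l : Filter ℝ) [l.NeBot]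
    (C : ℝ) (hC : 0 ≤ C) (hbd : ∀ t, ‖T t‖ ≤ C) (A : H →L[ℂ] H)
    (huniq : ∀ S, IsWOTClusterPt S l T → S = A) : WOTTendsto T l A := by
  intro v w
  by_contra hcon
  obtain ⟨s, hs, hfreq⟩ := not_tendsto_iff_exists_frequently_notMem.mp hcon
  have hne : (l ⊓ 𝓟 {t | ⟪v, T t w⟫ ∉ s}).NeBot := Filter.frequently_iff_neBot.mp hfreq
  obtain ⟨U, hU⟩ := Filter.exists_ultrafilter_le (l ⊓ 𝓟 {t | ⟪v, T t w⟫ ∉ s})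
  have hUl : (U : Filter ℝ) ≤ l := hU.trans inf_le_left
  have hbound : ∀ (v' w' : H) (t : ℝ), ‖⟪v', T t w'⟫‖ ≤ C * ‖v'‖ * ‖w'‖ := by
    intro v' w' t
    calc ‖⟪v', T t w'⟫‖ ≤ ‖v'‖ * ‖T t w'‖ := norm_inner_le_norm _ _
      _ ≤ ‖v'‖ * (‖T t‖ * ‖w'‖) := by
          gcongr; exact (T t).le_opNorm w'
      _ ≤ ‖v'‖ * (C * ‖w'‖) := by
          have := hbd t
          gcongr
      _ = C * ‖v'‖ * ‖w'‖ := by ring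
  have hex : ∀ v' w' : H, ∃ z : ℂ, Tendsto (fun t => ⟪v', T t w'⟫) U (nhds z) := by
    intro v' w'
    have hK : IsCompact (Metric.closedBall (0:ℂ) (C * ‖v'‖ * ‖w'‖)) :=
      isCompact_closedBall _ _
    have hm : U.map (fun t => ⟪v', T t w'⟫) ≤ 𝓟 (Metric.closedBall (0:ℂ) (C * ‖v'‖ * ‖w'‖)) := by
      rw [Filter.le_principal_iff, Ultrafilter.mem_coe, Ultrafilter.mem_map]
      exact Filter.univ_mem' fun t => by
        simpa [Metric.mem_closedBall, dist_eq_norm] using hbound v' w' t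
    obtain ⟨z, _, hz⟩ := hK.ultrafilter_le_nhds (U.map _) hm
    exact ⟨z, hz⟩
  choose f hf using hex
  obtain ⟨S, hS⟩ := vNa_exists_op_of_form f C hC
    (fun v' w w' => tendsto_nhds_unique (hf v' (w + w'))
      (by simpa [inner_add_right] using (hf v' w).add (hf v' w')))
    (fun c v' w' => tendsto_nhds_unique (hf v' (c • w'))
      (by simpa [inner_smul_right] using (hf v' w').const_mul c))
    (fun v' v'' w' => tendsto_nhds_unique (hf (v' + v'') w')
      (by simpa [inner_add_left] using (hf v' w').add (hf v'' w')))
    (fun c v' w' => tendsto_nhds_unique (hf (c • v') w')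
      (by simpa [inner_smul_left, mul_comm] using (hf v' w').const_mul ((starRingEnd ℂ) c)))
    (fun v' w' => le_of_tendsto (hf v' w').norm
      (Filter.Eventually.of_forall fun t => hbound v' w' t))
  have hScl : IsWOTClusterPt S l T := by
    rw [IsWOTClusterPt, mapClusterPt_iff_ultrafilter]
    refine ⟨U, hUl, ?_⟩
    have heq : (fun v' w' : H => (⟪v', S w'⟫ : ℂ)) = f := by
      funext v' w'; exact hS v' w'
    rw [heq, tendsto_pi_nhds]
    intro v'
    rw [tendsto_pi_nhds]
    intro w'
    exact hf v' w'
  have hSA : S = A := huniq S hScl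
  have h1 : Tendsto (fun t => ⟪v, T t w⟫) U (nhds ⟪v, A w⟫) := by
    have := hf v w
    rwa [← hS v w, hSA] at this
  have h2 : ∀ᶠ t in (U : Filter ℝ), ⟪v, T t w⟫ ∈ s := h1.eventually_mem hs
  have h3 : ∀ᶠ t in (U : Filter ℝ), ⟪v, T t w⟫ ∉ s :=
    (hU.trans inf_le_right) (Filter.mem_principal_self _)
  obtain ⟨t, ht1, ht2⟩ := (h2.and h3).exists
  exact ht2 ht1

end Aux

section Proj

variable {E : Type*} [NormedAddCommGroup E] [InnerProductSpace ℂ E]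

/-- Projection onto an invariant closed subspace commutes with the operator. -/
lemma vNa_proj_comm (V : Submodule ℂ E) [V.HasOrthogonalProjection]
    (A B : E →L[ℂ] E) (hAB : ∀ u v : E, ⟪A u, v⟫ = ⟪u, B v⟫)
    (hA : ∀ x ∈ V, A x ∈ V) (hB : ∀ x ∈ V, B x ∈ V) (u : E) :
    (V.subtypeL (V.orthogonalProjectionOnto (A u))) = A (V.subtypeL (V.orthogonalProjectionOnto u)) := by
  set p : E := V.subtypeL (V.orthogonalProjectionOnto u) with hp
  have hpV : p ∈ V := (V.orthogonalProjectionOnto u).2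
  have hq : u - p ∈ Vᗮ := Submodule.sub_starProjection_mem_orthogonal u
  have hAq : A (u - p) ∈ Vᗮ := by
    rw [Submodule.mem_orthogonal]
    intro y hy
    rw [← inner_conj_symm, hAB]
    have : ⟪u - p, B y⟫ = 0 := by
      rw [← inner_conj_symm, (Submodule.mem_orthogonal V _).mp hq (B y) (hB y hy)]
      simp
    rw [this]; simp
  have hAu : A u = A p + A (u - p) := by rw [← map_add]; congr 1; abel
  rw [hAu, map_add, map_add]
  have h1 : (V.orthogonalProjectionOnto (A p) : E) = A p :=
    Submodule.starProjection_eq_self_iff.mpr (hA p hpV)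
  have h2 : V.orthogonalProjectionOnto (A (u - p)) = 0 :=
    Submodule.orthogonalProjectionOnto_apply_of_mem_orthogonal hAq
  rw [h2]
  simp only [Submodule.subtypeL_apply, map_zero, Submodule.coe_zero, add_zero]
  exact h1

end Proj

section Diag

set_option linter.unusedSectionVars false

variable {H : Type*} [NormedAddCommGroup H] [InnerProductSpace ℂ H] [CompleteSpace H]

/-- The diagonal operator `X ⊕ X` on the Hilbert space `H ⊕₂ H`. -/
noncomputable def vNaDD (X : H →L[ℂ] H) : WithLp 2 (H × H) →L[ℂ] WithLp 2 (H × H) :=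
  ((WithLp.prodContinuousLinearEquiv 2 ℂ H H).symm.toContinuousLinearMap.comp
    ((X.prodMap X).comp (WithLp.prodContinuousLinearEquiv 2 ℂ H H).toContinuousLinearMap))

lemma vNaDD_fst (X : H →L[ℂ] H) (u : WithLp 2 (H × H)) : (vNaDD X u).fst = X u.fst := rfl
lemma vNaDD_snd (X : H →L[ℂ] H) (u : WithLp 2 (H × H)) : (vNaDD X u).snd = X u.snd := rfl

lemma vNaDD_mul (X Y : H →L[ℂ] H) (u : WithLp 2 (H × H)) :
    vNaDD X (vNaDD Y u) = vNaDD (X * Y) u := rfl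

lemma vNa_withlp_prod_ext {u v : WithLp 2 (H × H)} (h1 : u.fst = v.fst) (h2 : u.snd = v.snd) :
    u = v := WithLp.ofLp_injective 2 (Prod.ext h1 h2)

lemma vNaDD_add (X Y : H →L[ℂ] H) (u : WithLp 2 (H × H)) :
    vNaDD (X + Y) u = vNaDD X u + vNaDD Y u := by
  apply vNa_withlp_prod_ext <;> simp [vNaDD_fst, vNaDD_snd, WithLp.add_fst, WithLp.add_snd]

lemma vNaDD_smul (c : ℂ) (X : H →L[ℂ] H) (u : WithLp 2 (H × H)) :
    vNaDD (c • X) u = c • vNaDD X u := by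
  apply vNa_withlp_prod_ext <;> simp [vNaDD_fst, vNaDD_snd, WithLp.smul_fst, WithLp.smul_snd]

lemma vNaDD_sub (X Y : H →L[ℂ] H) (u : WithLp 2 (H × H)) :
    vNaDD (X - Y) u = vNaDD X u - vNaDD Y u := by
  apply vNa_withlp_prod_ext <;> simp [vNaDD_fst, vNaDD_snd, WithLp.sub_fst, WithLp.sub_snd]

lemma vNaDD_one (u : WithLp 2 (H × H)) : vNaDD (1 : H →L[ℂ] H) u = u := by
  apply vNa_withlp_prod_ext <;> simp [vNaDD_fst, vNaDD_snd]

lemma vNaDD_inner (X : H →L[ℂ] H) (u v : WithLp 2 (H × H)) :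
    ⟪vNaDD X u, v⟫ = ⟪u, vNaDD (star X) v⟫ := by
  simp only [WithLp.prod_inner_apply, vNaDD_fst, vNaDD_snd]
  show ⟪X u.fst, v.fst⟫ + ⟪X u.snd, v.snd⟫ = ⟪u.fst, star X v.fst⟫ + ⟪u.snd, star X v.snd⟫
  rw [ContinuousLinearMap.star_eq_adjoint, ContinuousLinearMap.adjoint_inner_right,
    ContinuousLinearMap.adjoint_inner_right]

noncomputable def vNaii1 : H →L[ℂ] WithLp 2 (H × H) :=
  (WithLp.prodContinuousLinearEquiv 2 ℂ H H).symm.toContinuousLinearMap.comp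
    (ContinuousLinearMap.inl ℂ H H)
noncomputable def vNaii2 : H →L[ℂ] WithLp 2 (H × H) :=
  (WithLp.prodContinuousLinearEquiv 2 ℂ H H).symm.toContinuousLinearMap.comp
    (ContinuousLinearMap.inr ℂ H H)
noncomputable def vNapp1 : WithLp 2 (H × H) →L[ℂ] H :=
  (ContinuousLinearMap.fst ℂ H H).comp
    (WithLp.prodContinuousLinearEquiv 2 ℂ H H).toContinuousLinearMap
noncomputable def vNapp2 : WithLp 2 (H × H) →L[ℂ] H :=
  (ContinuousLinearMap.snd ℂ H H).comp
    (WithLp.prodContinuousLinearEquiv 2 ℂ H H).toContinuousLinearMap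

lemma vNapp1_apply (u : WithLp 2 (H × H)) : vNapp1 u = u.fst := rfl
lemma vNapp2_apply (u : WithLp 2 (H × H)) : vNapp2 u = u.snd := rfl
lemma vNaii1_fst (x : H) : (vNaii1 (H := H) x).fst = x := rfl
lemma vNaii1_snd (x : H) : (vNaii1 (H := H) x).snd = 0 := rfl
lemma vNaii2_fst (x : H) : (vNaii2 (H := H) x).fst = 0 := rfl
lemma vNaii2_snd (x : H) : (vNaii2 (H := H) x).snd = x := rfl

lemma vNa_decomp (u : WithLp 2 (H × H)) : u = vNaii1 u.fst + vNaii2 u.snd := by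
  apply vNa_withlp_prod_ext <;>
    simp [WithLp.add_fst, WithLp.add_snd, vNaii1_fst, vNaii1_snd, vNaii2_fst, vNaii2_snd]

lemma vNaDD_ii1 (X : H →L[ℂ] H) (x : H) : vNaDD X (vNaii1 x) = vNaii1 (X x) := by
  apply vNa_withlp_prod_ext <;> simp [vNaDD_fst, vNaDD_snd, vNaii1_fst, vNaii1_snd]
lemma vNaDD_ii2 (X : H →L[ℂ] H) (x : H) : vNaDD X (vNaii2 x) = vNaii2 (X x) := by
  apply vNa_withlp_prod_ext <;> simp [vNaDD_fst, vNaDD_snd, vNaii2_fst, vNaii2_snd]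
lemma vNapp1_DD (X : H →L[ℂ] H) (u : WithLp 2 (H × H)) : vNapp1 (vNaDD X u) = X (vNapp1 u) := rfl
lemma vNapp2_DD (X : H →L[ℂ] H) (u : WithLp 2 (H × H)) : vNapp2 (vNaDD X u) = X (vNapp2 u) := rfl

/-- Anything commuting with all diagonal operators from `Nset` also commutes with diagonal
operators from the double centralizer of `Nset`. -/
lemma vNaDD_comm_of_centralizer (Nset : Set (H →L[ℂ] H))
    (T : WithLp 2 (H × H) →L[ℂ] WithLp 2 (H × H))
    (hT : ∀ Y ∈ Nset, ∀ u, vNaDD Y (T u) = T (vNaDD Y u))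
    (X : H →L[ℂ] H) (hX : X ∈ Set.centralizer (Set.centralizer Nset)) :
    ∀ u, vNaDD X (T u) = T (vNaDD X u) := by
  have block : ∀ (pk : WithLp 2 (H × H) →L[ℂ] H) (ij : H →L[ℂ] WithLp 2 (H × H)),
      (∀ (Y : H →L[ℂ] H) u, pk (vNaDD Y u) = Y (pk u)) →
      (∀ (Y : H →L[ℂ] H) (x : H), vNaDD Y (ij x) = ij (Y x)) →
      ∀ x, X (pk (T (ij x))) = pk (T (ij (X x))) := by
    intro pk ij hpk hij
    have hmem : pk.comp (T.comp ij) ∈ Set.centralizer Nset := by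
      rw [Set.mem_centralizer_iff]
      intro Y hY
      ext x
      simp only [ContinuousLinearMap.mul_apply, ContinuousLinearMap.comp_apply]
      rw [← hpk Y, hT Y hY, hij Y]
    have hcomm := hX _ hmem
    intro x
    have h2 := congrArg (fun (A : H →L[ℂ] H) => A x) hcomm
    simpa [ContinuousLinearMap.mul_apply, ContinuousLinearMap.comp_apply] using h2.symm
  intro u
  have hdec : ∀ z : WithLp 2 (H × H), z = vNaii1 (vNapp1 z) + vNaii2 (vNapp2 z) := by
    intro z; rw [vNapp1_apply, vNapp2_apply]; exact vNa_decomp z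
  have hTu : ∀ z : WithLp 2 (H × H),
      T z = vNaii1 (vNapp1 (T (vNaii1 (vNapp1 z)))) + vNaii2 (vNapp2 (T (vNaii1 (vNapp1 z))))
          + (vNaii1 (vNapp1 (T (vNaii2 (vNapp2 z)))) + vNaii2 (vNapp2 (T (vNaii2 (vNapp2 z))))) := by
    intro z
    conv_lhs => rw [hdec z, map_add]
    rw [← hdec (T (vNaii1 (vNapp1 z))), ← hdec (T (vNaii2 (vNapp2 z)))]
  rw [hTu u, hTu (vNaDD X u)]
  simp only [map_add, vNaDD_ii1, vNaDD_ii2]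
  rw [vNapp1_DD, vNapp2_DD]
  have b11 := block vNapp1 vNaii1 vNapp1_DD vNaDD_ii1
  have b21 := block vNapp2 vNaii1 vNapp2_DD vNaDD_ii1
  have b12 := block vNapp1 vNaii2 vNapp1_DD vNaDD_ii2
  have b22 := block vNapp2 vNaii2 vNapp2_DD vNaDD_ii2
  rw [b11, b21, b12, b22]

/-- Two vector states agreeing on a unital star subalgebra agree on its double centralizer. -/
lemma vNa_states_eq_of_eq_on (N : StarSubalgebra ℂ (H →L[ℂ] H)) (Ψφ Ψψ : H)
    (hΨφ : ‖Ψφ‖ = 1) (hΨψ : ‖Ψψ‖ = 1)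
    (hNeq : ∀ Y ∈ N, ⟪Ψφ, Y Ψφ⟫ = ⟪Ψψ, Y Ψψ⟫)
    (X : H →L[ℂ] H) (hX : X ∈ Set.centralizer (Set.centralizer (N : Set (H →L[ℂ] H)))) :
    ⟪Ψφ, X Ψφ⟫ = ⟪Ψψ, X Ψψ⟫ := by
  classical
  set Ψ : WithLp 2 (H × H) := (WithLp.equiv 2 (H × H)).symm (Ψφ, Ψψ) with hΨ
  have hΨfst : Ψ.fst = Ψφ := rfl
  have hΨsnd : Ψ.snd = Ψψ := rfl
  let L : (H →L[ℂ] H) →ₗ[ℂ] WithLp 2 (H × H) :=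
    { toFun := fun Y => vNaDD Y Ψ
      map_add' := fun Y Z => vNaDD_add Y Z Ψ
      map_smul' := fun c Y => vNaDD_smul c Y Ψ }
  set S : Submodule ℂ (WithLp 2 (H × H)) := (Subalgebra.toSubmodule N.toSubalgebra).map L with hS
  have hmemS : ∀ u, u ∈ S ↔ ∃ Y ∈ N, vNaDD Y Ψ = u := by
    intro u
    simp [hS, Submodule.mem_map, L]
  set V := S.topologicalClosure with hV
  haveI : CompleteSpace V := S.isClosed_topologicalClosure.completeSpace_coe
  set P : WithLp 2 (H × H) →L[ℂ] WithLp 2 (H × H) := V.subtypeL.comp (V.orthogonalProjectionOnto)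
    with hP
  have hmapsto : ∀ Y, (Y : H →L[ℂ] H) ∈ N → ∀ x ∈ V, vNaDD Y x ∈ V := by
    intro Y hY x hx
    have hmt : Set.MapsTo (vNaDD Y) (S : Set (WithLp 2 (H × H))) (S : Set (WithLp 2 (H × H))) := by
      intro u hu
      obtain ⟨Y', hY', rfl⟩ := (hmemS u).mp hu
      rw [vNaDD_mul]
      exact (hmemS _).mpr ⟨Y * Y', mul_mem hY hY', rfl⟩
    exact map_mem_closure (vNaDD Y).continuous hx hmt
  have hPcomm : ∀ Y ∈ (N : Set (H →L[ℂ] H)), ∀ u, vNaDD Y (P u) = P (vNaDD Y u) := by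
    intro Y hY u
    exact (vNa_proj_comm V (vNaDD Y) (vNaDD (star Y)) (vNaDD_inner Y) (hmapsto Y hY)
      (hmapsto (star Y) (star_mem hY)) u).symm
  have hXP : ∀ u, vNaDD X (P u) = P (vNaDD X u) :=
    vNaDD_comm_of_centralizer (N : Set (H →L[ℂ] H)) P hPcomm X hX
  have hΨS : Ψ ∈ S := (hmemS Ψ).mpr ⟨1, one_mem N, vNaDD_one Ψ⟩
  have hΨV : Ψ ∈ V := S.le_topologicalClosure hΨS
  have hPΨ : P Ψ = Ψ := by
    simp only [hP, ContinuousLinearMap.comp_apply, Submodule.subtypeL_apply]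
    exact Submodule.starProjection_eq_self_iff.mpr hΨV
  have hclose : vNaDD X Ψ ∈ closure (S : Set (WithLp 2 (H × H))) := by
    have heq : vNaDD X Ψ = P (vNaDD X Ψ) := by rw [← hXP Ψ, hPΨ]
    rw [heq]
    exact (V.orthogonalProjectionOnto (vNaDD X Ψ)).2
  have key : ∀ ε > (0:ℝ), ‖⟪Ψφ, X Ψφ⟫ - ⟪Ψψ, X Ψψ⟫‖ ≤ 0 + ε := by
    intro ε hε
    obtain ⟨u, huS, hud⟩ := Metric.mem_closure_iff.mp hclose (ε/2) (by positivity)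
    obtain ⟨Y, hY, rfl⟩ := (hmemS u).mp huS
    have hd : ‖vNaDD X Ψ - vNaDD Y Ψ‖ < ε/2 := by rwa [dist_eq_norm] at hud
    have hsub : vNaDD (X - Y) Ψ = vNaDD X Ψ - vNaDD Y Ψ := vNaDD_sub X Y Ψ
    set z := vNaDD (X - Y) Ψ with hz
    have hzf : z.fst = (X - Y) Ψφ := vNaDD_fst _ _
    have hzs : z.snd = (X - Y) Ψψ := vNaDD_snd _ _
    have hznorm : ‖z‖ < ε/2 := by rw [hsub]; exact hd
    have hsq : ‖z‖^2 = ‖z.fst‖^2 + ‖z.snd‖^2 := WithLp.prod_norm_sq_eq_of_L2 z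
    have hbf : ‖(X - Y) Ψφ‖ ≤ ‖z‖ := by
      rw [← hzf]; nlinarith [norm_nonneg z.fst, norm_nonneg z.snd, norm_nonneg z]
    have hbs : ‖(X - Y) Ψψ‖ ≤ ‖z‖ := by
      rw [← hzs]; nlinarith [norm_nonneg z.fst, norm_nonneg z.snd, norm_nonneg z]
    have h1 : ‖⟪Ψφ, (X - Y) Ψφ⟫‖ ≤ ‖(X - Y) Ψφ‖ := by
      calc ‖⟪Ψφ, (X - Y) Ψφ⟫‖ ≤ ‖Ψφ‖ * ‖(X - Y) Ψφ‖ := norm_inner_le_norm _ _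
        _ = ‖(X - Y) Ψφ‖ := by rw [hΨφ, one_mul]
    have h2 : ‖⟪Ψψ, (X - Y) Ψψ⟫‖ ≤ ‖(X - Y) Ψψ‖ := by
      calc ‖⟪Ψψ, (X - Y) Ψψ⟫‖ ≤ ‖Ψψ‖ * ‖(X - Y) Ψψ‖ := norm_inner_le_norm _ _
        _ = ‖(X - Y) Ψψ‖ := by rw [hΨψ, one_mul]
    have hid : ⟪Ψφ, X Ψφ⟫ - ⟪Ψψ, X Ψψ⟫
        = ⟪Ψφ, (X - Y) Ψφ⟫ - ⟪Ψψ, (X - Y) Ψψ⟫ := by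
      rw [ContinuousLinearMap.sub_apply, inner_sub_right,
        ContinuousLinearMap.sub_apply, inner_sub_right, hNeq Y hY]
      ring
    rw [hid, zero_add]
    calc ‖⟪Ψφ, (X - Y) Ψφ⟫ - ⟪Ψψ, (X - Y) Ψψ⟫‖
        ≤ ‖⟪Ψφ, (X - Y) Ψφ⟫‖ + ‖⟪Ψψ, (X - Y) Ψψ⟫‖ := norm_sub_le _ _
      _ ≤ ‖z‖ + ‖z‖ := add_le_add (h1.trans hbf) (h2.trans hbs)
      _ ≤ ε/2 + ε/2 := add_le_add hznorm.le hznorm.le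
      _ = ε := by ring
  have hle : ‖⟪Ψφ, X Ψφ⟫ - ⟪Ψψ, X Ψψ⟫‖ ≤ 0 := le_of_forall_pos_le_add (by
    intro ε hε; exact (key ε hε).trans_eq (by ring))
  have hz : ⟪Ψφ, X Ψφ⟫ - ⟪Ψψ, X Ψψ⟫ = 0 :=
    norm_eq_zero.mp (le_antisymm hle (norm_nonneg _))
  exact sub_eq_zero.mp hz

end Diag

section Stage1

variable {H : Type*} [NormedAddCommGroup H] [InnerProductSpace ℂ H] [CompleteSpace H]

/-- Stage 1: a net `γ t X` with only scalar WOT cluster points and an invariant vector state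
converges to the state value times the identity. -/
lemma vNa_stage1 (M : StarSubalgebra ℂ (H →L[ℂ] H)) (hMc : IsClosed (M : Set (H →L[ℂ] H)))
    (γ : ℝ → (M ≃⋆ₐ[ℂ] M)) (l : Filter ℝ) [l.NeBot] (Ψ : H) (hΨ : (⟪Ψ, Ψ⟫ : ℂ) = 1) (X : M)
    (hinv : ∀ t : ℝ, ⟪Ψ, (γ t X : H →L[ℂ] H) Ψ⟫ = ⟪Ψ, (X : H →L[ℂ] H) Ψ⟫)
    (hscalar : ∀ S, IsWOTClusterPt S l (fun t => (γ t X : H →L[ℂ] H)) →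
      ∃ c : ℂ, S = c • (1 : H →L[ℂ] H)) :
    WOTTendsto (fun t => (γ t X : H →L[ℂ] H)) l
      (⟪Ψ, (X : H →L[ℂ] H) Ψ⟫ • (1 : H →L[ℂ] H)) := by
  haveI := hMc
  apply vNa_wotTendsto_of_unique _ l ‖(X : H →L[ℂ] H)‖ (norm_nonneg _)
  · intro t
    exact le_of_eq (StarAlgEquiv.norm_map (γ t) X)
  · intro S hS
    obtain ⟨c, rfl⟩ := hscalar S hS
    have hconv : Tendsto (fun t => ⟪Ψ, (γ t X : H →L[ℂ] H) Ψ⟫) l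
        (nhds ⟪Ψ, (X : H →L[ℂ] H) Ψ⟫) := by
      have : (fun t => (⟪Ψ, (γ t X : H →L[ℂ] H) Ψ⟫ : ℂ))
          = fun _ => ⟪Ψ, (X : H →L[ℂ] H) Ψ⟫ := funext hinv
      rw [this]
      exact tendsto_const_nhds
    have hc := vNa_clusterPt_coord hS hconv
    have hcc : (⟪Ψ, (c • (1 : H →L[ℂ] H)) Ψ⟫ : ℂ) = c := by
      rw [ContinuousLinearMap.smul_apply, ContinuousLinearMap.one_apply, inner_smul_right, hΨ, mul_one]
    rw [hcc] at hc
    rw [hc]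

end Stage1

/-- Two vector states that are invariant under commuting one-parameter
automorphism groups of a von Neumann algebra `M = N''` agree, provided the relevant nets have
only scalar WOT cluster points. -/
theorem stmt1
    {H : Type*} [NormedAddCommGroup H] [InnerProductSpace ℂ H] [CompleteSpace H]
    (N M : StarSubalgebra ℂ (H →L[ℂ] H))
    (hNM : N ≤ M)
    (hM : (M : Set (H →L[ℂ] H)) = Set.centralizer (Set.centralizer (N : Set (H →L[ℂ] H))))
    (Ψφ Ψψ : H) (hΨφ : ‖Ψφ‖ = 1) (hΨψ : ‖Ψψ‖ = 1)
    (γφ γψ : ℝ → (M ≃⋆ₐ[ℂ] M))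
    (hγφ0 : ∀ X : M, γφ 0 X = X)
    (hγφadd : ∀ s t : ℝ, ∀ X : M, γφ (s + t) X = γφ s (γφ t X))
    (hγψ0 : ∀ X : M, γψ 0 X = X)
    (hγψadd : ∀ s t : ℝ, ∀ X : M, γψ (s + t) X = γψ s (γψ t X))
    (hcomm : ∀ s t : ℝ, ∀ X : M, γφ t (γψ s X) = γψ s (γφ t X))
    -- invariance of the vector states
    (hφinv : ∀ t : ℝ, ∀ X : M,
      ⟪Ψφ, (γφ t X : H →L[ℂ] H) Ψφ⟫ = ⟪Ψφ, (X : H →L[ℂ] H) Ψφ⟫)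
    (hψinv : ∀ t : ℝ, ∀ X : M,
      ⟪Ψψ, (γψ t X : H →L[ℂ] H) Ψψ⟫ = ⟪Ψψ, (X : H →L[ℂ] H) Ψψ⟫)
    -- cluster point hypotheses on elements of N
    (hφtop : ∀ X : M, (X : H →L[ℂ] H) ∈ N →
      (∃ S, IsWOTClusterPt S atTop fun t => (γφ t X : H →L[ℂ] H)) ∧
      ∀ S, (IsWOTClusterPt S atTop fun t => (γφ t X : H →L[ℂ] H)) →
        ∃ c : ℂ, S = c • (1 : H →L[ℂ] H))
    (hφbot : ∀ X : M, (X : H →L[ℂ] H) ∈ N →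
      (∃ S, IsWOTClusterPt S atBot fun t => (γφ t X : H →L[ℂ] H)) ∧
      ∀ S, (IsWOTClusterPt S atBot fun t => (γφ t X : H →L[ℂ] H)) →
        ∃ c : ℂ, S = c • (1 : H →L[ℂ] H))
    (hψtop : ∀ X : M, (X : H →L[ℂ] H) ∈ N →
      (∃ S, IsWOTClusterPt S atTop fun t => (γψ t X : H →L[ℂ] H)) ∧
      ∀ S, (IsWOTClusterPt S atTop fun t => (γψ t X : H →L[ℂ] H)) →
        ∃ c : ℂ, S = c • (1 : H →L[ℂ] H))
    (hψbot : ∀ X : M, (X : H →L[ℂ] H) ∈ N →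
      (∃ S, IsWOTClusterPt S atBot fun t => (γψ t X : H →L[ℂ] H)) ∧
      ∀ S, (IsWOTClusterPt S atBot fun t => (γψ t X : H →L[ℂ] H)) →
        ∃ c : ℂ, S = c • (1 : H →L[ℂ] H))
    (hcombined : ∀ X : M, (X : H →L[ℂ] H) ∈ N →
      (∃ S, IsWOTClusterPt S atTop fun t => (γψ (-t) (γφ t X) : H →L[ℂ] H)) ∧
      ∀ S, (IsWOTClusterPt S atTop fun t => (γψ (-t) (γφ t X) : H →L[ℂ] H)) →
        ∃ c : ℂ, S = c • (1 : H →L[ℂ] H)) :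
    (∀ X : M, (X : H →L[ℂ] H) ∈ N →
      WOTTendsto (fun t => (γφ t X : H →L[ℂ] H)) atTop
        (⟪Ψφ, (X : H →L[ℂ] H) Ψφ⟫ • (1 : H →L[ℂ] H)) ∧
      WOTTendsto (fun t => (γφ t X : H →L[ℂ] H)) atBot
        (⟪Ψφ, (X : H →L[ℂ] H) Ψφ⟫ • (1 : H →L[ℂ] H)) ∧
      WOTTendsto (fun t => (γψ t X : H →L[ℂ] H)) atTop
        (⟪Ψψ, (X : H →L[ℂ] H) Ψψ⟫ • (1 : H →L[ℂ] H)) ∧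
      WOTTendsto (fun t => (γψ t X : H →L[ℂ] H)) atBot
        (⟪Ψψ, (X : H →L[ℂ] H) Ψψ⟫ • (1 : H →L[ℂ] H))) ∧
    (∀ X : M, ⟪Ψφ, (X : H →L[ℂ] H) Ψφ⟫ = ⟪Ψψ, (X : H →L[ℂ] H) Ψψ⟫) := by
  have hMc : IsClosed (M : Set (H →L[ℂ] H)) := by
    rw [hM]; exact vNa_isClosed_centralizer _
  have hinnerφ : (⟪Ψφ, Ψφ⟫ : ℂ) = 1 := by
    rw [inner_self_eq_norm_sq_to_K, hΨφ]; norm_num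
  have hinnerψ : (⟪Ψψ, Ψψ⟫ : ℂ) = 1 := by
    rw [inner_self_eq_norm_sq_to_K, hΨψ]; norm_num
  -- stage 1: the four convergence statements
  have main1 : ∀ X : M, (X : H →L[ℂ] H) ∈ N →
      WOTTendsto (fun t => (γφ t X : H →L[ℂ] H)) atTop
        (⟪Ψφ, (X : H →L[ℂ] H) Ψφ⟫ • (1 : H →L[ℂ] H)) ∧
      WOTTendsto (fun t => (γφ t X : H →L[ℂ] H)) atBot
        (⟪Ψφ, (X : H →L[ℂ] H) Ψφ⟫ • (1 : H →L[ℂ] H)) ∧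
      WOTTendsto (fun t => (γψ t X : H →L[ℂ] H)) atTop
        (⟪Ψψ, (X : H →L[ℂ] H) Ψψ⟫ • (1 : H →L[ℂ] H)) ∧
      WOTTendsto (fun t => (γψ t X : H →L[ℂ] H)) atBot
        (⟪Ψψ, (X : H →L[ℂ] H) Ψψ⟫ • (1 : H →L[ℂ] H)) := by
    intro X hXN
    exact ⟨vNa_stage1 M hMc γφ atTop Ψφ hinnerφ X (fun t => hφinv t X) (hφtop X hXN).2,
      vNa_stage1 M hMc γφ atBot Ψφ hinnerφ X (fun t => hφinv t X) (hφbot X hXN).2,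
      vNa_stage1 M hMc γψ atTop Ψψ hinnerψ X (fun t => hψinv t X) (hψtop X hXN).2,
      vNa_stage1 M hMc γψ atBot Ψψ hinnerψ X (fun t => hψinv t X) (hψbot X hXN).2⟩
  refine ⟨main1, ?_⟩
  -- stage 2: the states agree on N
  have stage2 : ∀ X : M, (X : H →L[ℂ] H) ∈ N →
      ⟪Ψφ, (X : H →L[ℂ] H) Ψφ⟫ = ⟪Ψψ, (X : H →L[ℂ] H) Ψψ⟫ := by
    intro X hXN
    obtain ⟨S, hS⟩ := (hcombined X hXN).1
    obtain ⟨c, rfl⟩ := (hcombined X hXN).2 S hS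
    -- pin c at (Ψψ, Ψψ): equals φ(X)
    have hcφ : c = ⟪Ψφ, (X : H →L[ℂ] H) Ψφ⟫ := by
      have hnet : (fun t => (⟪Ψψ, (γψ (-t) (γφ t X) : H →L[ℂ] H) Ψψ⟫ : ℂ))
          = fun t => ⟪Ψψ, (γφ t X : H →L[ℂ] H) Ψψ⟫ :=
        funext fun t => hψinv (-t) (γφ t X)
      have hconv : Tendsto (fun t => (⟪Ψψ, (γψ (-t) (γφ t X) : H →L[ℂ] H) Ψψ⟫ : ℂ)) atTop
          (nhds ⟪Ψφ, (X : H →L[ℂ] H) Ψφ⟫) := by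
        rw [hnet]
        have := (main1 X hXN).1 Ψψ Ψψ
        simpa [inner_smul_right, hinnerψ, hΨψ] using this
      have := vNa_clusterPt_coord hS hconv
      simpa [inner_smul_right, hinnerψ, hΨψ] using this
    -- pin c at (Ψφ, Ψφ): equals ψ(X)
    have hcψ : c = ⟪Ψψ, (X : H →L[ℂ] H) Ψψ⟫ := by
      have hnet : (fun t => (⟪Ψφ, (γψ (-t) (γφ t X) : H →L[ℂ] H) Ψφ⟫ : ℂ))
          = fun t => ⟪Ψφ, (γψ (-t) X : H →L[ℂ] H) Ψφ⟫ := by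
        funext t
        rw [← hcomm (-t) t X]
        exact hφinv t (γψ (-t) X)
      have hconv : Tendsto (fun t => (⟪Ψφ, (γψ (-t) (γφ t X) : H →L[ℂ] H) Ψφ⟫ : ℂ)) atTop
          (nhds ⟪Ψψ, (X : H →L[ℂ] H) Ψψ⟫) := by
        rw [hnet]
        have hbot := (main1 X hXN).2.2.2 Ψφ Ψφ
        have hcomp := hbot.comp tendsto_neg_atTop_atBot
        simpa [inner_smul_right, hinnerφ, hΨφ, Function.comp_def] using hcomp
      have := vNa_clusterPt_coord hS hconv
      simpa [inner_smul_right, hinnerφ, hΨφ] using this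
    rw [← hcφ, hcψ]
  -- stage 3: extend to all of M
  intro X
  have hXmem : (X : H →L[ℂ] H) ∈ Set.centralizer (Set.centralizer (N : Set (H →L[ℂ] H))) := by
    rw [← hM]; exact X.2
  exact vNa_states_eq_of_eq_on N Ψφ Ψψ hΨφ hΨψ
    (fun Y hY => stage2 ⟨Y, hNM hY⟩ hY) (X : H →L[ℂ] H) hXmem
end

section
/- Let A be a unital C*-algebra with two one-parameter groups of *-automorphisms α^u and α^w that commute, and let κ be a *-automorphism of A satisfying κ ∘ α^u_t = α^w_t ∘ κ for all t ∈ ℝ. Let ω be a state on A with GNS data (π, H, Ω) such that: Ω is separating for M = π(A)''; ω is primary (M is a factor); (A, α^w, ω) is mixing; and for every a ∈ A and every X' ∈ (M ∩ M')', the commutator [π(α^w_{−t}(α^u_t(a))), X'] converges to 0 in the weak operator topology as t → +∞. If ω ∘ κ ≠ ω (ω is not invariant under κ), then κ is not unitarily implemented in the GNS representation of ω: there exists no unitary U : H → H with π(κ(a)) = U π(a) U⁻¹ for all a ∈ A. -/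
open Filter
open scoped ComplexOrder ComplexInnerProductSpace

section Auxiliary

variable {A : Type*} [NormedRing A] [StarRing A] [CStarRing A] [CompleteSpace A]
    [NormedAlgebra ℂ A] [StarModule ℂ A]
    {H : Type*} [NormedAddCommGroup H] [InnerProductSpace ℂ H] [CompleteSpace H]

/-- A unital star algebra homomorphism from a C*-algebra into bounded operators is
contractive. -/
lemma pi_norm_le (π : A →⋆ₐ[ℂ] (H →L[ℂ] H)) (a : A) : ‖π a‖ ≤ ‖a‖ := by
  letI : CStarAlgebra A := { }
  letI : CStarAlgebra (H →L[ℂ] H) := { }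
  exact NonUnitalStarAlgHom.norm_apply_le π a

/-- Star algebra automorphisms of a C*-algebra are isometric. -/
lemma equiv_norm_map (e : A ≃⋆ₐ[ℂ] A) (a : A) : ‖e a‖ = ‖a‖ := by
  letI : CStarAlgebra A := { }
  exact StarAlgEquiv.norm_map e a

/-- **Key cluster lemma.**  If a uniformly bounded family `π (β t)` of represented algebra
elements satisfies the two-point clustering property
`⟪π c Ω, π (β t) Ω⟫ → μ ⟪π c Ω, Ω⟫` (a consequence of mixing), and `Ω` is cyclic and
separating for the double commutant, then `π (β t) → μ • 1` in the weak operator topology. -/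
lemma clusterScalar (π : A →⋆ₐ[ℂ] (H →L[ℂ] H)) (Ω : H)
    (hcyc : (Submodule.span ℂ (Set.range fun b : A => π b Ω)).topologicalClosure = ⊤)
    (hsep : ∀ X ∈ Set.centralizer (Set.centralizer (Set.range fun b : A => π b)),
        X Ω = 0 → X = 0)
    (β : ℝ → A) (C : ℝ) (hC : ∀ t, ‖(π (β t) : H →L[ℂ] H)‖ ≤ C) (μ : ℂ)
    (hgen : ∀ c : A, Tendsto (fun t => ⟪π c Ω, π (β t) Ω⟫) atTop (nhds (μ * ⟪π c Ω, Ω⟫)))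
    (v w : H) : Tendsto (fun t => ⟪v, π (β t) w⟫) atTop (nhds (μ * ⟪v, w⟫)) := by
  have hC0 : 0 ≤ C := le_trans (norm_nonneg _) (hC 0)
  -- Step 1: weak convergence of the vectors `π (β t) Ω` to `μ • Ω`.
  have hΩvec : ∀ u : H, Tendsto (fun t => ⟪u, π (β t) Ω⟫) atTop (nhds (μ * ⟪u, Ω⟫)) := by
    have hbound : ∀ t, ‖π (β t) Ω - μ • Ω‖ ≤ C * ‖Ω‖ + ‖μ‖ * ‖Ω‖ := by
      intro t
      refine (norm_sub_le _ _).trans ?_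
      gcongr
      · exact le_trans ((π (β t)).le_opNorm Ω)
          (mul_le_mul_of_nonneg_right (hC t) (norm_nonneg _))
      · rw [norm_smul]
    have hspan : ∀ u ∈ Submodule.span ℂ (Set.range fun b : A => π b Ω),
        Tendsto (fun t => ⟪u, π (β t) Ω⟫) atTop (nhds (μ * ⟪u, Ω⟫)) := by
      intro u hu
      induction hu using Submodule.span_induction with
      | mem x hx =>
        obtain ⟨c, rfl⟩ := hx
        exact hgen c
      | zero => simpa using (tendsto_const_nhds : Tendsto (fun _ : ℝ => (0:ℂ)) atTop _)
      | add x y hx hy ihx ihy => simpa [inner_add_left, mul_add] using ihx.add ihy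
      | smul c x hx ih =>
        have h := (tendsto_const_nhds (x := starRingEnd ℂ c)).mul ih
        have e : μ * ⟪c • x, Ω⟫ = starRingEnd ℂ c * (μ * ⟪x, Ω⟫) := by
          rw [inner_smul_left]; ring
        rw [show (fun t => ⟪c • x, π (β t) Ω⟫) = fun t => starRingEnd ℂ c * ⟪x, π (β t) Ω⟫
          from funext fun t => by rw [inner_smul_left], e]
        exact h
    intro u
    have hdense : Dense ((Submodule.span ℂ (Set.range fun b : A => π b Ω) : Submodule ℂ H) :
        Set H) := Submodule.dense_iff_topologicalClosure_eq_top.mpr hcyc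
    rw [Metric.tendsto_atTop]
    intro ε hε
    set D : ℝ := C * ‖Ω‖ + ‖μ‖ * ‖Ω‖ + 1 with hD
    have hD0 : 0 < D := by
      have : (0:ℝ) ≤ C * ‖Ω‖ := mul_nonneg hC0 (norm_nonneg _)
      have : (0:ℝ) ≤ ‖μ‖ * ‖Ω‖ := mul_nonneg (norm_nonneg _) (norm_nonneg _)
      positivity
    obtain ⟨u', hu'mem, hu'close⟩ := hdense.exists_dist_lt u (show (0:ℝ) < ε / (2 * D) by positivity)
    have h1 := hspan u' hu'mem
    rw [Metric.tendsto_atTop] at h1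
    obtain ⟨N, hN⟩ := h1 (ε / 2) (by positivity)
    refine ⟨N, fun t ht => ?_⟩
    have hinner : ∀ z : H, ⟪z, π (β t) Ω⟫ - μ * ⟪z, Ω⟫ = ⟪z, π (β t) Ω - μ • Ω⟫ := by
      intro z
      rw [inner_sub_right, inner_smul_right]
    have hsplit : ⟪u, π (β t) Ω - μ • Ω⟫
        = ⟪u - u', π (β t) Ω - μ • Ω⟫ + ⟪u', π (β t) Ω - μ • Ω⟫ := by
      rw [← inner_add_left, sub_add_cancel]
    have e1 : ‖⟪u - u', π (β t) Ω - μ • Ω⟫‖ ≤ ‖u - u'‖ * D := by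
      refine (norm_inner_le_norm _ _).trans ?_
      have hδD : ‖π (β t) Ω - μ • Ω‖ ≤ D := (hbound t).trans (by rw [hD]; linarith)
      exact mul_le_mul_of_nonneg_left hδD (norm_nonneg _)
    have e2 : ‖⟪u', π (β t) Ω - μ • Ω⟫‖ < ε / 2 := by
      have := hN t ht
      rwa [dist_eq_norm, hinner u'] at this
    have e3 : ‖u - u'‖ * D < ε / 2 := by
      have hlt : ‖u - u'‖ < ε / (2 * D) := by rwa [dist_eq_norm] at hu'close
      calc ‖u - u'‖ * D < ε / (2 * D) * D := by
            exact mul_lt_mul_of_pos_right hlt hD0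
        _ = ε / 2 := by field_simp
    rw [dist_eq_norm, hinner u, hsplit]
    calc ‖⟪u - u', π (β t) Ω - μ • Ω⟫ + ⟪u', π (β t) Ω - μ • Ω⟫‖
        ≤ ‖⟪u - u', π (β t) Ω - μ • Ω⟫‖ + ‖⟪u', π (β t) Ω - μ • Ω⟫‖ := norm_add_le _ _
      _ < ε / 2 + ε / 2 := add_lt_add (lt_of_le_of_lt e1 e3) e2
      _ = ε := by ring
  -- Step 2: upgrade to full weak operator convergence via ultrafilter cluster points
  rw [tendsto_iff_ultrafilter]
  intro 𝒰 h𝒰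
  -- existence of ultrafilter limits of all matrix elements
  have hEx : ∀ x y : H, ∃ z : ℂ,
      Tendsto (fun t => ⟪x, π (β t) y⟫) (𝒰 : Filter ℝ) (nhds z) ∧ ‖z‖ ≤ ‖x‖ * (C * ‖y‖) := by
    intro x y
    have hmemK : ∀ t : ℝ, ⟪x, π (β t) y⟫ ∈ Metric.closedBall (0:ℂ) (‖x‖ * (C * ‖y‖)) := by
      intro t
      rw [Metric.mem_closedBall, dist_zero_right]
      refine (norm_inner_le_norm _ _).trans ?_
      have h2 : ‖π (β t) y‖ ≤ C * ‖y‖ :=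
        le_trans ((π (β t)).le_opNorm y) (mul_le_mul_of_nonneg_right (hC t) (norm_nonneg _))
      exact mul_le_mul_of_nonneg_left h2 (norm_nonneg _)
    obtain ⟨z, hz, hle⟩ := (isCompact_closedBall (0:ℂ) (‖x‖ * (C * ‖y‖))).ultrafilter_le_nhds
      (𝒰.map fun t => ⟪x, π (β t) y⟫)
      (by
        rw [Ultrafilter.coe_map, le_principal_iff, Filter.mem_map]
        exact Filter.univ_mem' hmemK)
    refine ⟨z, ?_, ?_⟩
    · rwa [Ultrafilter.coe_map] at hle
    · simpa [dist_zero_right] using (Metric.mem_closedBall.mp hz)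
  choose B hB using hEx
  haveI : (𝒰 : Filter ℝ).NeBot := 𝒰.neBot
  -- linearity of the limit form
  have hBr_add : ∀ x y z : H, B x (y + z) = B x y + B x z := by
    intro x y z
    refine tendsto_nhds_unique (hB x (y + z)).1 ?_
    have := (hB x y).1.add (hB x z).1
    refine this.congr fun t => ?_
    rw [← inner_add_right, ← map_add]
  have hBr_smul : ∀ (c : ℂ) (x y : H), B x (c • y) = c * B x y := by
    intro c x y
    refine tendsto_nhds_unique (hB x (c • y)).1 ?_
    have := (hB x y).1.const_mul c
    refine this.congr fun t => ?_
    rw [← inner_smul_right, ← map_smul]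
  have hBl_add : ∀ x y z : H, B (x + y) z = B x z + B y z := by
    intro x y z
    refine tendsto_nhds_unique (hB (x + y) z).1 ?_
    have := (hB x z).1.add (hB y z).1
    refine this.congr fun t => ?_
    rw [← inner_add_left]
  have hBl_smul : ∀ (c : ℂ) (x y : H), B (c • x) y = starRingEnd ℂ c * B x y := by
    intro c x y
    refine tendsto_nhds_unique (hB (c • x) y).1 ?_
    have := (hB x y).1.const_mul (starRingEnd ℂ c)
    refine this.congr fun t => ?_
    rw [← inner_smul_left]
  -- representing the limit form by an operator, via Riesz representation
  have hlin : ∀ y : H, ∃ u : H, ∀ x : H, ⟪x, u⟫ = B x y := by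
    intro y
    let ℓaux : H →ₗ[ℂ] ℂ :=
      { toFun := fun x => starRingEnd ℂ (B x y)
        map_add' := fun x z => by
          show starRingEnd ℂ (B (x + z) y) = starRingEnd ℂ (B x y) + starRingEnd ℂ (B z y)
          rw [hBl_add, map_add]
        map_smul' := fun c x => by
          show starRingEnd ℂ (B (c • x) y) = c • starRingEnd ℂ (B x y)
          rw [hBl_smul, map_mul, starRingEnd_self_apply, smul_eq_mul] }
    have hℓbound : ∀ x : H, ‖ℓaux x‖ ≤ (C * ‖y‖) * ‖x‖ := by
      intro x
      have := (hB x y).2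
      calc ‖ℓaux x‖ = ‖B x y‖ := by simp [ℓaux]
        _ ≤ ‖x‖ * (C * ‖y‖) := this
        _ = (C * ‖y‖) * ‖x‖ := by ring
    let ℓ : H →L[ℂ] ℂ := LinearMap.mkContinuous ℓaux (C * ‖y‖) hℓbound
    refine ⟨(InnerProductSpace.toDual ℂ H).symm ℓ, fun x => ?_⟩
    have h1 : ⟪(InnerProductSpace.toDual ℂ H).symm ℓ, x⟫ = ℓ x :=
      InnerProductSpace.toDual_symm_apply
    have h2 : ℓ x = starRingEnd ℂ (B x y) := rfl
    calc ⟪x, (InnerProductSpace.toDual ℂ H).symm ℓ⟫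
        = starRingEnd ℂ ⟪(InnerProductSpace.toDual ℂ H).symm ℓ, x⟫ := (inner_conj_symm _ _).symm
      _ = starRingEnd ℂ (starRingEnd ℂ (B x y)) := by rw [h1, h2]
      _ = B x y := starRingEnd_self_apply _
  choose Sf hSf using hlin
  have hSadd : ∀ y z : H, Sf (y + z) = Sf y + Sf z := by
    intro y z
    refine ext_inner_left ℂ fun x => ?_
    rw [hSf, inner_add_right, hSf, hSf, hBr_add]
  have hSsmul : ∀ (c : ℂ) (y : H), Sf (c • y) = c • Sf y := by
    intro c y
    refine ext_inner_left ℂ fun x => ?_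
    rw [hSf, inner_smul_right, hSf, hBr_smul]
  have hSbound : ∀ y : H, ‖Sf y‖ ≤ C * ‖y‖ := by
    intro y
    have key : ‖Sf y‖ * ‖Sf y‖ ≤ ‖Sf y‖ * (C * ‖y‖) := by
      have e1 : ⟪Sf y, Sf y⟫ = B (Sf y) y := hSf y (Sf y)
      have e2 : ‖⟪Sf y, Sf y⟫‖ = ‖Sf y‖ * ‖Sf y‖ := by
        rw [inner_self_eq_norm_sq_to_K]
        simp [sq]
      have e3 := (hB (Sf y) y).2
      rw [← e2, e1]
      exact e3
    by_cases h0 : ‖Sf y‖ = 0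
    · rw [h0]
      positivity
    · have hpos : 0 < ‖Sf y‖ := lt_of_le_of_ne (norm_nonneg _) (Ne.symm h0)
      exact le_of_mul_le_mul_left key hpos
  let S : H →L[ℂ] H := LinearMap.mkContinuous
    { toFun := Sf
      map_add' := hSadd
      map_smul' := hSsmul } C hSbound
  have hS : ∀ x y : H, ⟪x, S y⟫ = B x y := fun x y => hSf y x
  -- S commutes with the commutant
  have hcomm' : ∀ Y ∈ Set.centralizer (Set.range fun b : A => π b), Y * S = S * Y := by
    intro Y hY
    ext w'
    refine ext_inner_left ℂ fun x => ?_
    have hYπ : ∀ t : ℝ, Y (π (β t) w') = π (β t) (Y w') := by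
      intro t
      have h := Set.mem_centralizer_iff.mp hY (π (β t)) ⟨β t, rfl⟩
      have := DFunLike.congr_fun h w'
      simpa [ContinuousLinearMap.mul_apply] using this.symm
    have hBmove : B (ContinuousLinearMap.adjoint Y x) w' = B x (Y w') := by
      refine tendsto_nhds_unique (hB (ContinuousLinearMap.adjoint Y x) w').1 ?_
      refine ((hB x (Y w')).1).congr fun t => ?_
      rw [ContinuousLinearMap.adjoint_inner_left, hYπ]
    calc ⟪x, (Y * S) w'⟫ = ⟪x, Y (S w')⟫ := rfl
      _ = ⟪ContinuousLinearMap.adjoint Y x, S w'⟫ :=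
          (ContinuousLinearMap.adjoint_inner_left Y (S w') x).symm
      _ = B (ContinuousLinearMap.adjoint Y x) w' := hS _ _
      _ = B x (Y w') := hBmove
      _ = ⟪x, S (Y w')⟫ := (hS _ _).symm
      _ = ⟪x, (S * Y) w'⟫ := rfl
  have hSmem : S ∈ Set.centralizer (Set.centralizer (Set.range fun b : A => π b)) :=
    Set.mem_centralizer_iff.mpr fun Y hY => hcomm' Y hY
  have hSΩ : S Ω = μ • Ω := by
    refine ext_inner_left ℂ fun x => ?_
    rw [hS, inner_smul_right]
    exact tendsto_nhds_unique (hB x Ω).1 ((hΩvec x).mono_left h𝒰)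
  have hXmem : S - μ • (1 : H →L[ℂ] H) ∈
      Set.centralizer (Set.centralizer (Set.range fun b : A => π b)) := by
    rw [Set.mem_centralizer_iff]
    intro Y hY
    have h1 := hcomm' Y hY
    rw [mul_sub, sub_mul, h1, mul_smul_comm, smul_mul_assoc, mul_one, one_mul]
  have hXΩ : (S - μ • (1 : H →L[ℂ] H)) Ω = 0 := by
    simp [ContinuousLinearMap.sub_apply, hSΩ]
  have hSval : S = μ • (1 : H →L[ℂ] H) := sub_eq_zero.mp (hsep _ hXmem hXΩ)
  have hBvw : B v w = μ * ⟪v, w⟫ := by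
    rw [← hS v w, hSval]
    simp [inner_smul_right]
  rw [← hBvw]
  exact (hB v w).1

end Auxiliary

/-- Let `κ` be a *-automorphism intertwining two commuting one-parameter
automorphism groups (`κ ∘ αu_t = αw_t ∘ κ`).  If `ω` is a primary state with separating GNS
vector which is mixing for `αw`, the relative translations act weakly asymptotically abelian
in its GNS representation, and `ω ∘ κ ≠ ω`, then `κ` is not unitarily implemented in the GNS
representation of `ω`. -/
theorem stmt5
    {A : Type*} [NormedRing A] [StarRing A] [CStarRing A] [CompleteSpace A]
    [NormedAlgebra ℂ A] [StarModule ℂ A]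
    {H : Type*} [NormedAddCommGroup H] [InnerProductSpace ℂ H] [CompleteSpace H]
    -- two commuting one-parameter groups of *-automorphisms
    (αu αw : ℝ → (A ≃⋆ₐ[ℂ] A))
    (hu0 : ∀ a : A, αu 0 a = a)
    (huadd : ∀ s t : ℝ, ∀ a : A, αu (s + t) a = αu s (αu t a))
    (hw0 : ∀ a : A, αw 0 a = a)
    (hwadd : ∀ s t : ℝ, ∀ a : A, αw (s + t) a = αw s (αw t a))
    (hcomm : ∀ s t : ℝ, ∀ a : A, αu s (αw t a) = αw t (αu s a))
    -- a *-automorphism intertwining the two groups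
    (κ : A ≃⋆ₐ[ℂ] A)
    (hκ : ∀ t : ℝ, ∀ a : A, κ (αu t a) = αw t (κ a))
    -- a state
    (ω : A →ₗ[ℂ] ℂ)
    (hω1 : ω 1 = 1) (hωpos : ∀ a : A, 0 ≤ ω (star a * a))
    -- GNS data for ω
    (π : A →⋆ₐ[ℂ] (H →L[ℂ] H)) (Ω : H) (hΩnorm : ‖Ω‖ = 1)
    (hrep : ∀ a : A, ω a = ⟪Ω, π a Ω⟫)
    (hcyc : (Submodule.span ℂ (Set.range fun b : A => π b Ω)).topologicalClosure = ⊤)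
    -- Ω separating for M = π(A)''
    (hsep : ∀ X ∈ Set.centralizer (Set.centralizer (Set.range fun b : A => π b)),
        X Ω = 0 → X = 0)
    -- primarity: M ∩ M' = ℂ·1
    (hprim : Set.centralizer (Set.centralizer (Set.range fun b : A => π b)) ∩
        Set.centralizer (Set.centralizer (Set.centralizer (Set.range fun b : A => π b))) =
        Set.range fun c : ℂ => c • (1 : H →L[ℂ] H))
    -- (A, αw, ω) is mixing
    (hinv : ∀ t : ℝ, ∀ a : A, ω (αw t a) = ω a)
    (hmix : ∀ a b : A, Tendsto (fun t => ω (b * αw t a)) atTop (nhds (ω a * ω b)))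
    -- the relative translations αw_{-t} ∘ αu_t act weakly asymptotically abelian in π
    (habel : ∀ a : A,
      ∀ X' ∈ Set.centralizer
        (Set.centralizer (Set.centralizer (Set.range fun b : A => π b)) ∩
          Set.centralizer (Set.centralizer (Set.centralizer (Set.range fun b : A => π b)))),
      WOTTendsto
        (fun t => π (αw (-t) (αu t a)) * X' - X' * π (αw (-t) (αu t a))) atTop 0)
    -- ω is not κ-invariant
    (hnotinv : ¬ ∀ a : A, ω (κ a) = ω a) :
    ¬ ∃ U : H ≃ₗᵢ[ℂ] H, ∀ (a : A) (v : H), π (κ a) v = U (π a (U.symm v)) := by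
  rintro ⟨U, hU⟩
  set ψ : H := U.symm Ω with hψ
  -- basic identities
  have hπ_star : ∀ x : A, (π (star x) : H →L[ℂ] H) = ContinuousLinearMap.adjoint (π x) := by
    intro x
    rw [← ContinuousLinearMap.star_eq_adjoint, ← map_star]
  have hωstar : ∀ x : A, ω (star x) = starRingEnd ℂ (ω x) := by
    intro x
    rw [hrep, hrep, hπ_star, ContinuousLinearMap.adjoint_inner_right]
    exact (inner_conj_symm _ _).symm
  have hip : ∀ c x : A, ⟪π c Ω, π x Ω⟫ = ω (star c * x) := by
    intro c x
    rw [hrep, map_mul, hπ_star]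
    rw [ContinuousLinearMap.mul_apply, ContinuousLinearMap.adjoint_inner_right]
  have hipΩ : ∀ c : A, ⟪π c Ω, Ω⟫ = ω (star c) := by
    intro c
    rw [hωstar, hrep]
    exact (inner_conj_symm _ _).symm
  have hΩΩ : ⟪Ω, Ω⟫ = (1 : ℂ) := by
    rw [inner_self_eq_norm_sq_to_K, hΩnorm]
    norm_num
  have hψψ : ⟪ψ, ψ⟫ = (1 : ℂ) := by
    rw [hψ, LinearIsometryEquiv.inner_map_map U.symm Ω Ω]
    exact hΩΩ
  -- the vector state of ψ represents ω ∘ κ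
  have hκω : ∀ x : A, ω (κ x) = ⟪ψ, π x ψ⟫ := by
    intro x
    rw [hrep, hU x Ω]
    calc ⟪Ω, U (π x ψ)⟫ = ⟪U ψ, U (π x ψ)⟫ := by rw [hψ, U.apply_symm_apply]
      _ = ⟪ψ, π x ψ⟫ := U.inner_map_map _ _
  -- intertwining at the level of operators
  have hαu : ∀ (t : ℝ) (a : A) (w : H), π (αu t a) w = U.symm (π (αw t (κ a)) (U w)) := by
    intro t a w
    have h1 : π (κ (αu t a)) (U w) = U (π (αu t a) w) := by
      rw [hU]
      rw [U.symm_apply_apply]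
    rw [hκ] at h1
    rw [h1, U.symm_apply_apply]
  -- Step A : ω (αu t a) → ω (κ a)
  have h4 : ∀ a : A, Tendsto (fun t => ω (αu t a)) atTop (nhds (ω (κ a))) := by
    intro a
    have hCb : ∀ t : ℝ, ‖(π (αw t (κ a)) : H →L[ℂ] H)‖ ≤ ‖κ a‖ := by
      intro t
      calc ‖(π (αw t (κ a)) : H →L[ℂ] H)‖ ≤ ‖αw t (κ a)‖ := pi_norm_le π _
        _ = ‖κ a‖ := equiv_norm_map (αw t) _
    have hgen : ∀ c : A, Tendsto (fun t => ⟪π c Ω, π (αw t (κ a)) Ω⟫) atTop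
        (nhds (ω (κ a) * ⟪π c Ω, Ω⟫)) := by
      intro c
      have hm := hmix (κ a) (star c)
      have e1 : (fun t => ⟪π c Ω, π (αw t (κ a)) Ω⟫) = fun t => ω (star c * αw t (κ a)) :=
        funext fun t => hip c _
      rw [e1, hipΩ]
      exact hm
    have hconv := clusterScalar π Ω hcyc hsep (fun t => αw t (κ a)) ‖κ a‖ hCb (ω (κ a)) hgen
      (U Ω) (U Ω)
    have e2 : (fun t => ω (αu t a)) = fun t => ⟪U Ω, π (αw t (κ a)) (U Ω)⟫ := by
      funext t
      rw [hrep, hαu t a Ω]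
      calc ⟪Ω, U.symm (π (αw t (κ a)) (U Ω))⟫
          = ⟪U Ω, U (U.symm (π (αw t (κ a)) (U Ω)))⟫ := (U.inner_map_map _ _).symm
        _ = ⟪U Ω, π (αw t (κ a)) (U Ω)⟫ := by rw [U.apply_symm_apply]
    have e3 : ⟪U Ω, U Ω⟫ = (1 : ℂ) := by rw [U.inner_map_map]; exact hΩΩ
    rw [e2]
    simpa [e3, hΩnorm] using hconv
  -- Step B : ω (κ (αw (-t) a)) → ω a
  have hαwinv : ∀ (t : ℝ) (x : A), αw t (αw (-t) x) = x := by
    intro t x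
    rw [← hwadd]
    simp [hw0]
  have h5 : ∀ a : A, Tendsto (fun t => ω (κ (αw (-t) a))) atTop (nhds (ω a)) := by
    intro a
    have hCb : ∀ t : ℝ, ‖(π (αw (-t) a) : H →L[ℂ] H)‖ ≤ ‖a‖ := by
      intro t
      calc ‖(π (αw (-t) a) : H →L[ℂ] H)‖ ≤ ‖αw (-t) a‖ := pi_norm_le π _
        _ = ‖a‖ := equiv_norm_map _ _
    have hgen : ∀ c : A, Tendsto (fun t => ⟪π c Ω, π (αw (-t) a) Ω⟫) atTop
        (nhds (ω a * ⟪π c Ω, Ω⟫)) := by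
      intro c
      have key : ∀ t : ℝ, ω (star c * αw (-t) a) = starRingEnd ℂ (ω (star a * αw t c)) := by
        intro t
        rw [← hinv t (star c * αw (-t) a), map_mul, hαwinv]
        have h := hωstar (star a * αw t c)
        rw [star_mul, star_star, ← map_star] at h
        exact h
      have hm := hmix c (star a)
      have hconj : Tendsto (fun t => starRingEnd ℂ (ω (star a * αw t c))) atTop
          (nhds (starRingEnd ℂ (ω c * ω (star a)))) :=
        (Complex.continuous_conj.tendsto _).comp hm
      have e0 : starRingEnd ℂ (ω c * ω (star a)) = ω a * ω (star c) := by
        rw [map_mul, ← hωstar c, ← hωstar (star a), star_star]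
        ring
      have e1 : (fun t => ⟪π c Ω, π (αw (-t) a) Ω⟫)
          = fun t => starRingEnd ℂ (ω (star a * αw t c)) :=
        funext fun t => by rw [hip, key]
      rw [e1, hipΩ, ← e0]
      exact hconj
    have hconv := clusterScalar π Ω hcyc hsep (fun t => αw (-t) a) ‖a‖ hCb (ω a) hgen ψ ψ
    have e2 : (fun t => ω (κ (αw (-t) a))) = fun t => ⟪ψ, π (αw (-t) a) ψ⟫ :=
      funext fun t => hκω _
    rw [e2]
    simpa [hψψ, (by rw [hψ, LinearIsometryEquiv.norm_map, hΩnorm] : ‖ψ‖ = 1)] using hconv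
  -- Step C : the commutator hypothesis bridges the two limits
  have h3 : ∀ a : A, Tendsto (fun t => ω (κ (αw (-t) a)) - ω (αu t a)) atTop (nhds 0) := by
    intro a
    set X' : H →L[ℂ] H := (innerSL ℂ Ω).smulRight ψ with hX'
    have hX'mem : X' ∈ Set.centralizer
        (Set.centralizer (Set.centralizer (Set.range fun b : A => π b)) ∩
          Set.centralizer (Set.centralizer (Set.centralizer (Set.range fun b : A => π b)))) := by
      rw [hprim, Set.mem_centralizer_iff]
      rintro g ⟨c, rfl⟩
      ext u
      simp [ContinuousLinearMap.mul_apply, inner_smul_right, smul_smul, mul_comm]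
    have hh := habel a X' hX'mem ψ Ω
    have e : ∀ t : ℝ, ⟪ψ, (π (αw (-t) (αu t a)) * X' - X' * π (αw (-t) (αu t a))) Ω⟫
        = ω (κ (αw (-t) a)) - ω (αu t a) := by
      intro t
      have hX'Ω : X' Ω = ψ := by
        simp [hX', hΩΩ, hΩnorm]
      rw [ContinuousLinearMap.sub_apply, inner_sub_right, ContinuousLinearMap.mul_apply,
        ContinuousLinearMap.mul_apply, hX'Ω]
      have t2 : ⟪ψ, X' (π (αw (-t) (αu t a)) Ω)⟫ = ⟪Ω, π (αw (-t) (αu t a)) Ω⟫ := by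
        simp [hX', inner_smul_right, hψψ, (by rw [hψ, LinearIsometryEquiv.norm_map, hΩnorm] : ‖ψ‖ = 1)]
      have t1 : ⟪ψ, π (αw (-t) (αu t a)) ψ⟫ = ω (κ (αw (-t) a)) := by
        rw [← hκω, ← hcomm t (-t) a, hκ t (αw (-t) a), hinv t]
      have t3 : ⟪Ω, π (αw (-t) (αu t a)) Ω⟫ = ω (αu t a) := by
        rw [← hrep, hinv (-t)]
      rw [t2, t1, t3]
    have := hh.congr e
    simpa using this
  -- conclusion
  apply hnotinv
  intro a
  have hcomb := (h5 a).sub (h4 a)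
  have h0 := tendsto_nhds_unique hcomb (h3 a)
  have := sub_eq_zero.mp h0
  exact this.symm
end

section
/- Let A be a unital C*-algebra, α a one-parameter group of *-automorphisms of A, and ω a state on A with GNS data (π, H, Ω), invariant under α. (i) If Ω is separating for M = π(A)'' and (A, α, ω) is mixing, then (A, α, ω) is weakly asymptotically abelian: for all a, b ∈ A, the commutator [π(α_t(a)), π(b)] converges to 0 in the weak operator topology as t → +∞. (ii) Conversely, if ω is primary (M is a factor) and (A, α, ω) is weakly asymptotically abelian, then (A, α, ω) is mixing. -/
open Filter
open scoped ComplexOrder ComplexInnerProductSpace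

section AuxLemmas

variable {H : Type*} [NormedAddCommGroup H] [InnerProductSpace ℂ H]

/-- Extend weak convergence of a uniformly bounded family of vectors from a dense submodule. -/
lemma aux_weak_tendsto_ext {ι : Type*} {l : Filter ι} {y : ι → H} {z : H} {C : ℝ}
    (hy : ∀ t, ‖y t‖ ≤ C) (hz : ‖z‖ ≤ C)
    {D : Submodule ℂ H} (hD : D.topologicalClosure = ⊤)
    (hbase : ∀ v ∈ D, Tendsto (fun t => ⟪v, y t⟫) l (nhds ⟪v, z⟫)) (v : H) :
    Tendsto (fun t => ⟪v, y t⟫) l (nhds ⟪v, z⟫) := by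
  have hC0 : 0 ≤ C := le_trans (norm_nonneg z) hz
  rw [Metric.tendsto_nhds]
  intro ε hε
  have hδ : 0 < ε / (2 * (2 * C + 1)) := by positivity
  have hvK : v ∈ closure (D : Set H) := by
    rw [← Submodule.topologicalClosure_coe, hD]; trivial
  obtain ⟨v', hv'D, hv'⟩ := Metric.mem_closure_iff.mp hvK _ hδ
  have hmid := Metric.tendsto_nhds.mp (hbase v' hv'D) (ε / 2) (by positivity)
  filter_upwards [hmid] with t ht
  have hsplit : ⟪v, y t⟫ - ⟪v, z⟫ = ⟪v - v', y t - z⟫ + ⟪v', y t - z⟫ := by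
    rw [inner_sub_left, inner_sub_right, inner_sub_right]; ring
  have hb1 : ‖y t - z‖ ≤ 2 * C + 1 := by
    calc ‖y t - z‖ ≤ ‖y t‖ + ‖z‖ := norm_sub_le _ _
      _ ≤ C + C := add_le_add (hy t) hz
      _ ≤ 2 * C + 1 := by linarith
  have h1 : dist (⟪v, y t⟫) (⟪v, z⟫) ≤ ‖v - v'‖ * (2 * C + 1) + dist (⟪v', y t⟫) (⟪v', z⟫) := by
    rw [dist_eq_norm, dist_eq_norm, hsplit, ← inner_sub_right]
    calc ‖⟪v - v', y t - z⟫ + ⟪v', y t - z⟫‖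
        ≤ ‖⟪v - v', y t - z⟫‖ + ‖⟪v', y t - z⟫‖ := norm_add_le _ _
      _ ≤ ‖v - v'‖ * ‖y t - z‖ + ‖⟪v', y t - z⟫‖ := by
          gcongr; exact norm_inner_le_norm _ _
      _ ≤ ‖v - v'‖ * (2 * C + 1) + ‖⟪v', y t - z⟫‖ := by gcongr
  have h2 : ‖v - v'‖ * (2 * C + 1) < ε / 2 := by
    have hd : ‖v - v'‖ < ε / (2 * (2 * C + 1)) := by
      rwa [← dist_eq_norm]
    have hpos : (0:ℝ) < 2 * C + 1 := by linarith
    calc ‖v - v'‖ * (2 * C + 1) < ε / (2 * (2 * C + 1)) * (2 * C + 1) := by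
          exact mul_lt_mul_of_pos_right hd hpos
      _ = ε / 2 := by field_simp
  calc dist (⟪v, y t⟫) (⟪v, z⟫) ≤ ‖v - v'‖ * (2 * C + 1) + dist (⟪v', y t⟫) (⟪v', z⟫) := h1
    _ < ε / 2 + ε / 2 := by exact add_lt_add h2 ht
    _ = ε := by ring

variable [CompleteSpace H]

/-- An operator leaving a closed subspace and its orthogonal complement invariant commutes
with the orthogonal projection. -/
lemma aux_proj_commute (K : Submodule ℂ H) [CompleteSpace K] (T : H →L[ℂ] H)
    (h1 : ∀ x ∈ K, T x ∈ K) (h2 : ∀ x ∈ K, ContinuousLinearMap.adjoint T x ∈ K) :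
    T * (K.subtypeL ∘L K.orthogonalProjectionOnto) = (K.subtypeL ∘L K.orthogonalProjectionOnto) * T := by
  set P := K.subtypeL ∘L K.orthogonalProjectionOnto with hPdef
  have hPid : ∀ x ∈ K, P x = x := by
    intro x hx
    exact congrArg Subtype.val (Submodule.orthogonalProjectionOnto_mem_subspace_eq_self (⟨x, hx⟩ : K))
  have hPmem : ∀ x, P x ∈ K := fun x => (K.orthogonalProjectionOnto x).2
  have key : ∀ S : H →L[ℂ] H, (∀ x ∈ K, S x ∈ K) → P * (S * P) = S * P := by
    intro S hS
    ext x
    exact hPid _ (hS _ (hPmem x))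
  have e1 := key T h1
  have e2 := key (ContinuousLinearMap.adjoint T) h2
  have hPsa : star P = P := isSelfAdjoint_starProjection K
  have hstarT : star (ContinuousLinearMap.adjoint T) = T := by
    rw [ContinuousLinearMap.star_eq_adjoint, ContinuousLinearMap.adjoint_adjoint]
  have e3 := congrArg star e2
  rw [star_mul, star_mul, hPsa, hstarT] at e3
  calc T * P = P * (T * P) := e1.symm
    _ = P * T * P := by rw [← mul_assoc]
    _ = P * T := e3

/-- Along an ultrafilter, a uniformly bounded family of operators has a WOT limit. -/
lemma aux_exists_wot_cluster {ι : Type*} (U : Ultrafilter ι)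
    (T : ι → H →L[ℂ] H) (C : ℝ) (hC0 : 0 ≤ C) (hC : ∀ t, ‖T t‖ ≤ C) :
    ∃ X : H →L[ℂ] H, ∀ v w : H,
      Tendsto (fun t => ⟪v, T t w⟫) (U : Filter ι) (nhds ⟪v, X w⟫) := by
  have key : ∀ v w : H, ∃ c : ℂ, Tendsto (fun t => ⟪v, T t w⟫) (U : Filter ι) (nhds c) := by
    intro v w
    have hb : ∀ t, ⟪v, T t w⟫ ∈ Metric.closedBall (0 : ℂ) (C * ‖v‖ * ‖w‖) := by
      intro t
      rw [Metric.mem_closedBall, dist_zero_right]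
      calc ‖⟪v, T t w⟫‖ ≤ ‖v‖ * ‖T t w‖ := norm_inner_le_norm _ _
        _ ≤ ‖v‖ * (‖T t‖ * ‖w‖) := by gcongr; exact (T t).le_opNorm w
        _ ≤ ‖v‖ * (C * ‖w‖) := by gcongr; exact hC t
        _ = C * ‖v‖ * ‖w‖ := by ring
    obtain ⟨c, -, hc⟩ := (isCompact_closedBall (0:ℂ) (C * ‖v‖ * ‖w‖)).ultrafilter_le_nhds
      (U.map fun t => ⟪v, T t w⟫)
      (by
        rw [Ultrafilter.coe_map, le_principal_iff, Filter.mem_map]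
        exact Filter.univ_mem' hb)
    exact ⟨c, by rwa [Ultrafilter.coe_map] at hc⟩
  choose φ hφ using key
  have hadd_v : ∀ (v v' w : H), φ (v + v') w = φ v w + φ v' w := by
    intro v v' w
    refine tendsto_nhds_unique (hφ _ _) ?_
    have := (hφ v w).add (hφ v' w)
    simpa only [← inner_add_left] using this
  have hsmul_v : ∀ (c : ℂ) (v w : H), φ (c • v) w = (starRingEnd ℂ) c * φ v w := by
    intro c v w
    refine tendsto_nhds_unique (hφ _ _) ?_
    have := (hφ v w).const_mul ((starRingEnd ℂ) c)
    simpa only [← inner_smul_left] using this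
  have hadd_w : ∀ (v w w' : H), φ v (w + w') = φ v w + φ v w' := by
    intro v w w'
    refine tendsto_nhds_unique (hφ _ _) ?_
    have := (hφ v w).add (hφ v w')
    simpa only [← inner_add_right, ← map_add] using this
  have hsmul_w : ∀ (c : ℂ) (v w : H), φ v (c • w) = c * φ v w := by
    intro c v w
    refine tendsto_nhds_unique (hφ _ _) ?_
    have := (hφ v w).const_mul c
    simpa only [← inner_smul_right, ← map_smul] using this
  have hbound : ∀ v w, ‖φ v w‖ ≤ C * ‖v‖ * ‖w‖ := by
    intro v w
    have hn := (hφ v w).norm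
    refine le_of_tendsto hn (Filter.Eventually.of_forall fun t => ?_)
    calc ‖⟪v, T t w⟫‖ ≤ ‖v‖ * ‖T t w‖ := norm_inner_le_norm _ _
      _ ≤ ‖v‖ * (‖T t‖ * ‖w‖) := by gcongr; exact (T t).le_opNorm w
      _ ≤ ‖v‖ * (C * ‖w‖) := by gcongr; exact hC t
      _ = C * ‖v‖ * ‖w‖ := by ring
  let F : H →ₛₗ[starRingEnd ℂ] (H →ₗ[ℂ] ℂ) :=
    { toFun := fun w =>
        { toFun := fun v => (starRingEnd ℂ) (φ v w)
          map_add' := fun v v' => by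
            show (starRingEnd ℂ) (φ (v + v') w)
                = (starRingEnd ℂ) (φ v w) + (starRingEnd ℂ) (φ v' w)
            rw [hadd_v, map_add]
          map_smul' := fun c v => by
            show (starRingEnd ℂ) (φ (c • v) w) = (RingHom.id ℂ) c • (starRingEnd ℂ) (φ v w)
            rw [hsmul_v, map_mul, starRingEnd_self_apply]
            simp [smul_eq_mul] }
      map_add' := fun w w' => LinearMap.ext fun v => by
        simp only [LinearMap.coe_mk, AddHom.coe_mk, LinearMap.add_apply]
        rw [hadd_w]; exact map_add _ _ _
      map_smul' := fun c w => LinearMap.ext fun v => by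
        simp only [LinearMap.coe_mk, AddHom.coe_mk, LinearMap.smul_apply]
        rw [hsmul_w]
        simp [smul_eq_mul, mul_comm] }
  have hFB : ∀ w v, ‖F w v‖ ≤ C * ‖w‖ * ‖v‖ := by
    intro w v
    have : ‖F w v‖ = ‖φ v w‖ := by
      simp [F, RCLike.norm_conj]
    rw [this]
    calc ‖φ v w‖ ≤ C * ‖v‖ * ‖w‖ := hbound v w
      _ = C * ‖w‖ * ‖v‖ := by ring
  let B : H →L⋆[ℂ] H →L[ℂ] ℂ := LinearMap.mkContinuous₂ F C hFB
  refine ⟨InnerProductSpace.continuousLinearMapOfBilin B, fun v w => ?_⟩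
  have hX : ⟪v, InnerProductSpace.continuousLinearMapOfBilin B w⟫ = φ v w := by
    have h1 := InnerProductSpace.continuousLinearMapOfBilin_apply B w v
    have h2 : ⟪v, InnerProductSpace.continuousLinearMapOfBilin B w⟫
        = (starRingEnd ℂ) ⟪InnerProductSpace.continuousLinearMapOfBilin B w, v⟫ :=
      (inner_conj_symm _ _).symm
    rw [h2, h1]
    show (starRingEnd ℂ) (F w v) = φ v w
    simp [F]
  rw [hX]
  exact hφ v w

end AuxLemmas

/-- Let `ω` be an `α`-invariant state with GNS data `(π, H, Ω)`.
(i) If `Ω` is separating for `M = π(A)''` and `(A, α, ω)` is mixing, then `(A, α, ω)` is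
weakly asymptotically abelian.  (ii) Conversely, if `ω` is primary and `(A, α, ω)` is weakly
asymptotically abelian, then `(A, α, ω)` is mixing. -/
theorem stmt6
    {A : Type*} [NormedRing A] [StarRing A] [CStarRing A] [CompleteSpace A]
    [NormedAlgebra ℂ A] [StarModule ℂ A]
    {H : Type*} [NormedAddCommGroup H] [InnerProductSpace ℂ H] [CompleteSpace H]
    -- one-parameter group of *-automorphisms
    (α : ℝ → (A ≃⋆ₐ[ℂ] A))
    (hα0 : ∀ a : A, α 0 a = a)
    (hαadd : ∀ s t : ℝ, ∀ a : A, α (s + t) a = α s (α t a))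
    -- state
    (ω : A →ₗ[ℂ] ℂ)
    (hω1 : ω 1 = 1)
    (hωpos : ∀ a : A, 0 ≤ ω (star a * a))
    -- GNS data
    (π : A →⋆ₐ[ℂ] (H →L[ℂ] H)) (Ω : H) (hΩnorm : ‖Ω‖ = 1)
    (hrep : ∀ a : A, ω a = ⟪Ω, π a Ω⟫)
    (hcyc : (Submodule.span ℂ (Set.range fun b : A => π b Ω)).topologicalClosure = ⊤)
    -- ω is α-invariant
    (hinv : ∀ t : ℝ, ∀ a : A, ω (α t a) = ω a) :
    -- (i) separating + mixing → weak asymptotic abelianness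
    ((∀ X ∈ Set.centralizer (Set.centralizer (Set.range fun b : A => π b)),
        X Ω = 0 → X = 0) →
      (∀ a b : A, Tendsto (fun t => ω (b * α t a)) atTop (nhds (ω a * ω b))) →
      ∀ a b : A,
        WOTTendsto (fun t => π (α t a) * π b - π b * π (α t a)) atTop 0) ∧
    -- (ii) primary + weak asymptotic abelianness → mixing
    ((Set.centralizer (Set.centralizer (Set.range fun b : A => π b)) ∩
        Set.centralizer (Set.centralizer (Set.centralizer (Set.range fun b : A => π b))) =
        Set.range fun c : ℂ => c • (1 : H →L[ℂ] H)) →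
      (∀ a b : A,
        WOTTendsto (fun t => π (α t a) * π b - π b * π (α t a)) atTop 0) →
      ∀ a b : A, Tendsto (fun t => ω (b * α t a)) atTop (nhds (ω a * ω b))) := by
  letI : CStarAlgebra A := { }
  -- basic norm estimates
  have hπle : ∀ x : A, ‖π x‖ ≤ ‖x‖ := fun x => NonUnitalStarAlgHom.norm_apply_le π x
  have hαnorm : ∀ (t : ℝ) (x : A), ‖α t x‖ = ‖x‖ := fun t x => StarAlgEquiv.norm_map (α t) x
  have hTn : ∀ (a : A) (t : ℝ), ‖π (α t a)‖ ≤ ‖a‖ := fun a t => by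
    have := hπle (α t a); rwa [hαnorm t a] at this
  have hvecn : ∀ (a : A) (t : ℝ) (v : H), ‖π (α t a) v‖ ≤ ‖a‖ * ‖v‖ := fun a t v =>
    ((π (α t a)).le_opNorm v).trans (mul_le_mul_of_nonneg_right (hTn a t) (norm_nonneg v))
  -- adjoints
  have hadj : ∀ c : A, ContinuousLinearMap.adjoint (π c) = π (star c) := fun c => by
    rw [← ContinuousLinearMap.star_eq_adjoint, ← map_star]
  have hip : ∀ (c : A) (x y : H), ⟪π c x, y⟫ = ⟪x, π (star c) y⟫ := fun c x y => by
    rw [← hadj c, ContinuousLinearMap.adjoint_inner_right]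
  have hip' : ∀ (c : A) (x y : H), ⟪x, π c y⟫ = ⟪π (star c) x, y⟫ := fun c x y => by
    have := hip (star c) x y; rw [star_star] at this; exact this.symm
  have hωstar : ∀ c : A, ω (star c) = (starRingEnd ℂ) (ω c) := fun c => by
    rw [hrep, hrep, ← hip c Ω Ω]
    exact (inner_conj_symm _ _).symm
  have hωle : ∀ x : A, ‖ω x‖ ≤ ‖x‖ := fun x => by
    rw [hrep]
    have h1 : ‖π x Ω‖ ≤ ‖x‖ := by
      have := (π x).le_opNorm Ω
      rw [hΩnorm, mul_one] at this
      exact this.trans (hπle x)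
    calc ‖⟪Ω, π x Ω⟫‖ ≤ ‖Ω‖ * ‖π x Ω‖ := norm_inner_le_norm _ _
      _ = ‖π x Ω‖ := by rw [hΩnorm, one_mul]
      _ ≤ ‖x‖ := h1
  constructor
  · -- Part (i)
    intro hsep hmix
    -- Step 1 : π(α_t a)Ω converges weakly to ω(a)Ω
    have P1 : ∀ (a : A) (v : H),
        Tendsto (fun t => ⟪v, π (α t a) Ω⟫) atTop (nhds (ω a * ⟪v, Ω⟫)) := by
      intro a v
      have hz' : ω a * ⟪v, Ω⟫ = ⟪v, ω a • Ω⟫ := (inner_smul_right _ _ _).symm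
      rw [hz']
      refine aux_weak_tendsto_ext (y := fun t => π (α t a) Ω) (z := ω a • Ω) (C := ‖a‖)
        (fun t => by have := hvecn a t Ω; rwa [hΩnorm, mul_one] at this)
        (by rw [norm_smul, hΩnorm, mul_one]; exact hωle a) hcyc ?_ v
      intro u hu
      induction hu using Submodule.span_induction with
      | mem x hx =>
        obtain ⟨c, rfl⟩ := hx
        have he : ∀ t : ℝ, ⟪π c Ω, π (α t a) Ω⟫ = ω (star c * α t a) := fun t => by
          rw [hip, hrep, map_mul]; rfl
        have he2 : ⟪π c Ω, ω a • Ω⟫ = ω a * ω (star c) := by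
          rw [inner_smul_right, hip, ← hrep]
        simp only [he]
        rw [he2]
        exact hmix a (star c)
      | zero => simp only [inner_zero_left]; exact tendsto_const_nhds
      | add x y hx hy ihx ihy => simp only [inner_add_left]; exact ihx.add ihy
      | smul c x hx ih => simp only [inner_smul_left]; exact ih.const_mul _
    -- Step 2 : matrix elements against Ω in the first slot
    have P1' : ∀ (a : A) (u : H),
        Tendsto (fun t => ⟪Ω, π (α t a) u⟫) atTop (nhds (ω a * ⟪Ω, u⟫)) := by
      intro a u
      have h := (P1 (star a) u).star
      have hfun : (fun t => ⟪Ω, π (α t a) u⟫)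
          = fun t => star ⟪u, π (α t (star a)) Ω⟫ := by
        funext t
        rw [← starRingEnd_apply, inner_conj_symm, hip (α t (star a)) Ω u]
        have hst : star (α t (star a)) = α t a := by rw [← map_star, star_star]
        rw [hst]
      have hlim : ω a * ⟪Ω, u⟫ = star (ω (star a) * ⟪u, Ω⟫) := by
        rw [star_mul', ← starRingEnd_apply, ← starRingEnd_apply, hωstar, starRingEnd_self_apply,
          inner_conj_symm]
      rw [hfun, hlim]
      exact h
    -- Step 3 : density of the commutant orbit of Ω
    set rng : Set (H →L[ℂ] H) := Set.range fun b : A => π b with hrng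
    set Dset : Set H := (fun S : H →L[ℂ] H => S Ω) '' Set.centralizer rng with hDsetdef
    set D2 : Submodule ℂ H := Submodule.span ℂ Dset with hD2def
    have hKclosed : IsClosed (D2.topologicalClosure : Set H) :=
      Submodule.isClosed_topologicalClosure D2
    haveI : CompleteSpace D2.topologicalClosure := hKclosed.completeSpace_coe
    set K : Submodule ℂ H := D2.topologicalClosure with hKdef
    set P : H →L[ℂ] H := K.subtypeL ∘L K.orthogonalProjectionOnto with hPdef
    have hstarC : ∀ S ∈ Set.centralizer rng, star S ∈ Set.centralizer rng := by
      intro S hS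
      refine Set.star_mem_centralizer' ?_ hS
      rintro x ⟨b, rfl⟩
      exact ⟨star b, map_star π b⟩
    have hmaps : ∀ S ∈ Set.centralizer rng, ∀ x ∈ K, S x ∈ K := by
      intro S hS
      have hD : ∀ x ∈ D2, S x ∈ D2 := by
        intro x hx
        induction hx using Submodule.span_induction with
        | mem y hy =>
          obtain ⟨R, hR, rfl⟩ := hy
          exact Submodule.subset_span ⟨S * R, Set.mul_mem_centralizer hS hR, rfl⟩
        | zero => rw [map_zero]; exact D2.zero_mem
        | add x y hx hy ihx ihy => rw [map_add]; exact D2.add_mem ihx ihy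
        | smul c x hx ih => rw [map_smul]; exact D2.smul_mem c ih
      intro x hx
      have hclosed : IsClosed (S ⁻¹' (K : Set H)) := hKclosed.preimage S.continuous
      have hsub : (D2 : Set H) ⊆ S ⁻¹' (K : Set H) := fun y hy =>
        D2.le_topologicalClosure (hD y hy)
      have hx' : x ∈ closure (D2 : Set H) := by
        rw [← Submodule.topologicalClosure_coe]
        exact hx
      exact closure_minimal hsub hclosed hx'
    have hcommP : ∀ S ∈ Set.centralizer rng, S * P = P * S := by
      intro S hS
      refine aux_proj_commute K S (hmaps S hS) ?_
      intro x hx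
      rw [← ContinuousLinearMap.star_eq_adjoint]
      exact hmaps _ (hstarC S hS) x hx
    have hΩK : Ω ∈ K :=
      D2.le_topologicalClosure
        (Submodule.subset_span ⟨1, Set.one_mem_centralizer, ContinuousLinearMap.one_apply Ω⟩)
    have hPΩ : P Ω = Ω := by
      show ((K.orthogonalProjectionOnto Ω : K) : H) = Ω
      exact congrArg Subtype.val (Submodule.orthogonalProjectionOnto_mem_subspace_eq_self (⟨Ω, hΩK⟩ : K))
    have h1P : (1 : H →L[ℂ] H) - P ∈ Set.centralizer (Set.centralizer rng) := by
      intro S hS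
      rw [mul_sub, sub_mul, mul_one, one_mul, hcommP S hS]
    have hzero : ((1 : H →L[ℂ] H) - P) Ω = 0 := by
      rw [ContinuousLinearMap.sub_apply, ContinuousLinearMap.one_apply, hPΩ, sub_self]
    have hP1 : (1 : H →L[ℂ] H) = P := sub_eq_zero.mp (hsep _ h1P hzero)
    have hKtop : D2.topologicalClosure = ⊤ := by
      rw [Submodule.eq_top_iff']
      intro x
      have hx : P x ∈ K := (K.orthogonalProjectionOnto x).2
      rwa [← hP1, ContinuousLinearMap.one_apply] at hx
    -- Step 4 : full WOT convergence of π(α_t a) to ω(a)·1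
    have P2 : ∀ (a : A) (v w : H),
        Tendsto (fun t => ⟪w, π (α t a) v⟫) atTop (nhds (ω a * ⟪w, v⟫)) := by
      intro a v w
      have hz' : ω a * ⟪w, v⟫ = ⟪w, ω a • v⟫ := (inner_smul_right _ _ _).symm
      rw [hz']
      refine aux_weak_tendsto_ext (y := fun t => π (α t a) v) (z := ω a • v)
        (C := ‖a‖ * ‖v‖) (fun t => hvecn a t v)
        (by rw [norm_smul]; exact mul_le_mul_of_nonneg_right (hωle a) (norm_nonneg v))
        hKtop ?_ w
      intro u hu
      induction hu using Submodule.span_induction with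
      | mem y hy =>
        obtain ⟨S, hS, rfl⟩ := hy
        have hcm : ∀ t : ℝ, ContinuousLinearMap.adjoint S (π (α t a) v)
            = π (α t a) (ContinuousLinearMap.adjoint S v) := by
          intro t
          have h := hstarC S hS (π (α t a)) ⟨α t a, rfl⟩
          rw [← ContinuousLinearMap.star_eq_adjoint]
          calc star S (π (α t a) v) = (star S * π (α t a)) v := rfl
            _ = (π (α t a) * star S) v := by rw [← h]
            _ = _ := rfl
        have e1 : ∀ t : ℝ, ⟪S Ω, π (α t a) v⟫
            = ⟪Ω, π (α t a) (ContinuousLinearMap.adjoint S v)⟫ := fun t => by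
          rw [← hcm t, ContinuousLinearMap.adjoint_inner_right]
        simp only [e1]
        have hlim := P1' a (ContinuousLinearMap.adjoint S v)
        rw [ContinuousLinearMap.adjoint_inner_right] at hlim
        rw [inner_smul_right]
        exact hlim
      | zero => simp only [inner_zero_left]; exact tendsto_const_nhds
      | add x y hx hy ihx ihy => simp only [inner_add_left]; exact ihx.add ihy
      | smul c x hx ih => simp only [inner_smul_left]; exact ih.const_mul _
    -- Conclusion of (i)
    intro a b
    unfold WOTTendsto
    intro v w
    simp only [ContinuousLinearMap.zero_apply, inner_zero_right]
    have h1 := P2 a (π b w) v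
    have h2 := P2 a w (π (star b) v)
    have heq : ∀ t : ℝ, ⟪v, (π (α t a) * π b - π b * π (α t a)) w⟫
        = ⟪v, π (α t a) (π b w)⟫ - ⟪π (star b) v, π (α t a) w⟫ := fun t => by
      rw [ContinuousLinearMap.sub_apply, inner_sub_right]
      congr 1
      exact hip' b v (π (α t a) w)
    have hswap : ⟪π (star b) v, w⟫ = ⟪v, π b w⟫ := (hip' b v w).symm
    have hlim : ω a * ⟪v, π b w⟫ - ω a * ⟪π (star b) v, w⟫ = 0 := by
      rw [hswap]; ring
    have h3 := h1.sub h2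
    rw [hlim] at h3
    simp only [heq]
    exact h3
  · -- Part (ii)
    intro hfac hab a b
    rw [tendsto_iff_ultrafilter]
    intro U hU
    obtain ⟨X, hX⟩ :=
      aux_exists_wot_cluster U (fun t => π (α t a)) ‖a‖ (norm_nonneg a) (hTn a)
    -- X commutes with π(A)
    have hXM' : X ∈ Set.centralizer (Set.range fun b : A => π b) := by
      rintro m ⟨b', rfl⟩
      ext w
      refine ext_inner_left ℂ fun v => ?_
      have t2 := hX v (π b' w)
      have t1 : Tendsto (fun t => ⟪v, π b' (π (α t a) w)⟫) (U : Filter ℝ)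
          (nhds ⟪v, π b' (X w)⟫) := by
        have h := hX (π (star b') v) w
        simp only [hip' b'] at *
        exact h
      have hdiff : Tendsto (fun t => ⟪v, π (α t a) (π b' w)⟫ - ⟪v, π b' (π (α t a) w)⟫)
          (U : Filter ℝ) (nhds 0) := by
        have h := (hab a b' v w).mono_left hU
        simpa only [ContinuousLinearMap.sub_apply, inner_sub_right,
          ContinuousLinearMap.mul_apply, ContinuousLinearMap.zero_apply,
          inner_zero_right] using h
      have huniq := tendsto_nhds_unique (t2.sub t1) hdiff
      have := sub_eq_zero.mp huniq
      exact this.symm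
    -- X commutes with the commutant of π(A)
    have hXM : X ∈ Set.centralizer (Set.centralizer (Set.range fun b : A => π b)) := by
      intro g hg
      ext w
      refine ext_inner_left ℂ fun v => ?_
      have t2 := hX v (g w)
      have t1 : Tendsto (fun t => ⟪v, g (π (α t a) w)⟫) (U : Filter ℝ)
          (nhds ⟪v, g (X w)⟫) := by
        have e : ∀ u : H, ⟪v, g u⟫ = ⟪ContinuousLinearMap.adjoint g v, u⟫ := fun u =>
          (ContinuousLinearMap.adjoint_inner_left g u v).symm
        simp only [e]
        exact hX _ w
      have e2 : ∀ t : ℝ, g (π (α t a) w) = π (α t a) (g w) := fun t => by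
        have h := hg (π (α t a)) ⟨α t a, rfl⟩
        calc g (π (α t a) w) = (g * π (α t a)) w := rfl
          _ = (π (α t a) * g) w := by rw [← h]
          _ = _ := rfl
      simp only [e2] at t1
      exact tendsto_nhds_unique t1 t2
    -- hence X is a scalar
    have hXmem : X ∈ Set.range fun c : ℂ => c • (1 : H →L[ℂ] H) := by
      rw [← hfac]
      exact ⟨hXM, Set.subset_centralizer_centralizer hXM'⟩
    obtain ⟨c, hc⟩ := hXmem
    have hΩΩ : ⟪Ω, Ω⟫ = (1 : ℂ) := by
      rw [inner_self_eq_norm_sq_to_K, hΩnorm]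
      norm_num
    have hXΩ : X Ω = c • Ω := by
      rw [← hc, ContinuousLinearMap.smul_apply, ContinuousLinearMap.one_apply]
    have hcval : c = ω a := by
      have t1 := hX Ω Ω
      have e : (fun t : ℝ => ⟪Ω, π (α t a) Ω⟫) = fun _ => ω a := funext fun t => by
        rw [← hrep, hinv]
      rw [e] at t1
      have t2 : ⟪Ω, X Ω⟫ = c := by rw [hXΩ, inner_smul_right, hΩΩ, mul_one]
      have := tendsto_nhds_unique t1 tendsto_const_nhds
      rw [t2] at this
      exact this
    -- final computation
    have e : ∀ t : ℝ, ω (b * α t a) = ⟪π (star b) Ω, π (α t a) Ω⟫ := fun t => by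
      rw [hrep, map_mul]
      exact hip' b Ω (π (α t a) Ω)
    have hlim2 : ⟪π (star b) Ω, X Ω⟫ = ω a * ω b := by
      have h2 : ⟪π (star b) Ω, Ω⟫ = ⟪Ω, π b Ω⟫ := (hip' b Ω Ω).symm
      rw [hXΩ, inner_smul_right, h2, ← hrep, hcval]
    have hfinal := hX (π (star b) Ω) Ω
    rw [hlim2] at hfinal
    simp only [e]
    exact hfinal
end

section
/- Fix ζ ∈ ℝ. For f, g ∈ L²(ℝ³; ℂ), define h : ℝ × S² → ℂ (almost everywhere) by h(s, ω) = s · f(s·ω) for s > 0 and h(s, ω) = s · e^{iζ} · g(−s·ω) for s < 0. Then h belongs to L²(ℝ × S²; ℂ) (with respect to the product of Lebesgue measure ds on ℝ and the surface measure dΩ on S²) and ‖h‖²_{L²(ℝ×S²)} = ‖f‖²_{L²(ℝ³)} + ‖g‖²_{L²(ℝ³)}; moreover the induced linear map L²(ℝ³; ℂ) ⊕ L²(ℝ³; ℂ) → L²(ℝ × S²; ℂ), (f, g) ↦ h, is surjective. Hence this Jakšić–Pillet gluing map is a unitary (a surjective linear isometry) from L²(ℝ³) ⊕ L²(ℝ³)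 onto L²(ℝ × S²). -/
open MeasureTheory
open scoped ENNReal

namespace Stmt9Aux

abbrev E := EuclideanSpace ℝ (Fin 3)
abbrev S := Metric.sphere (0 : E) 1

lemma measurable_smul2 : Measurable fun p : ℝ × S => p.1 • (p.2 : E) :=
  (continuous_fst.smul (continuous_subtype_val.comp continuous_snd)).measurable

lemma sq_eLpNorm {α : Type*} [MeasurableSpace α] (μ : Measure α) (f : α → ℂ) :
    eLpNorm f 2 μ ^ 2 = ∫⁻ x, (‖f x‖₊ : ℝ≥0∞) ^ 2 ∂μ := by
  rw [eLpNorm_eq_lintegral_rpow_enorm_toReal two_ne_zero ENNReal.ofNat_ne_top]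
  have h2 : (2 : ℝ≥0∞).toReal = 2 := by simp
  rw [h2, ← ENNReal.rpow_natCast _ 2, ← ENNReal.rpow_mul]
  norm_num
  rfl

end Stmt9Aux

namespace Stmt9Aux

lemma key_pos (μS : Measure S) [SFinite μS]
    (hμS : ∀ F : E → ℝ≥0∞, Measurable F →
      ∫⁻ x, F x = ∫⁻ q in Set.Ioi (0 : ℝ),
        (∫⁻ ω, F (q • (ω : E)) ∂μS) * ENNReal.ofReal (q ^ 2))
    {F : E → ℝ≥0∞} (hF : Measurable F) :
    ∫⁻ p : ℝ × S, (if 0 < p.1 then F (p.1 • (p.2 : E)) * ENNReal.ofReal (p.1 ^ 2) else 0)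
      ∂((volume : Measure ℝ).prod μS) = ∫⁻ x, F x := by
  have hm : Measurable fun p : ℝ × S =>
      (if 0 < p.1 then F (p.1 • (p.2 : E)) * ENNReal.ofReal (p.1 ^ 2) else 0) := by
    refine Measurable.ite ?_ ((hF.comp measurable_smul2).mul
      ((measurable_fst.pow_const 2).ennreal_ofReal)) measurable_const
    exact measurableSet_lt measurable_const measurable_fst
  rw [lintegral_prod _ hm.aemeasurable]
  have key : ∀ s : ℝ, ∫⁻ ω, (if 0 < s then F (s • (ω : E)) * ENNReal.ofReal (s ^ 2) else 0) ∂μS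
      = Set.indicator (Set.Ioi (0:ℝ))
          (fun s => (∫⁻ ω, F (s • (ω : E)) ∂μS) * ENNReal.ofReal (s ^ 2)) s := by
    intro s
    by_cases hs : 0 < s
    · rw [Set.indicator_of_mem (Set.mem_Ioi.mpr hs)]
      simp only [hs, if_true]
      exact lintegral_mul_const _
        (hF.comp (by fun_prop : Continuous fun ω : S => s • (ω : E)).measurable)
    · simp [hs, Set.indicator_of_notMem, Set.mem_Ioi]
  simp_rw [key]
  rw [lintegral_indicator measurableSet_Ioi]
  exact (hμS F hF).symm

end Stmt9Aux

namespace Stmt9Aux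

lemma meas_pos_integrand {F : E → ℝ≥0∞} (hF : Measurable F) :
    Measurable fun p : ℝ × S =>
      (if 0 < p.1 then F (p.1 • (p.2 : E)) * ENNReal.ofReal (p.1 ^ 2) else 0) := by
  refine Measurable.ite ?_ ((hF.comp measurable_smul2).mul
    ((measurable_fst.pow_const 2).ennreal_ofReal)) measurable_const
  exact measurableSet_lt measurable_const measurable_fst

lemma key_neg (μS : Measure S) [SFinite μS]
    (hμS : ∀ F : E → ℝ≥0∞, Measurable F →
      ∫⁻ x, F x = ∫⁻ q in Set.Ioi (0 : ℝ),
        (∫⁻ ω, F (q • (ω : E)) ∂μS) * ENNReal.ofReal (q ^ 2))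
    {F : E → ℝ≥0∞} (hF : Measurable F) :
    ∫⁻ p : ℝ × S, (if p.1 < 0 then F ((-p.1) • (p.2 : E)) * ENNReal.ofReal (p.1 ^ 2) else 0)
      ∂((volume : Measure ℝ).prod μS) = ∫⁻ x, F x := by
  have hneg : MeasurePreserving (Prod.map (Neg.neg : ℝ → ℝ) (id : S → S))
      ((volume : Measure ℝ).prod μS) ((volume : Measure ℝ).prod μS) :=
    (Measure.measurePreserving_neg _).prod (MeasurePreserving.id _)
  rw [← key_pos μS hμS hF, ← hneg.lintegral_comp (meas_pos_integrand hF)]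
  refine lintegral_congr fun p => ?_
  simp only [Prod.map, id_eq, neg_pos, neg_sq]

end Stmt9Aux

namespace Stmt9Aux

lemma muS_lt_top (μS : Measure S)
    (hμS : ∀ F : E → ℝ≥0∞, Measurable F →
      ∫⁻ x, F x = ∫⁻ q in Set.Ioi (0 : ℝ),
        (∫⁻ ω, F (q • (ω : E)) ∂μS) * ENNReal.ofReal (q ^ 2)) :
    μS Set.univ < ⊤ := by
  by_contra htop
  have hμtop : μS Set.univ = ⊤ := by
    simpa [lt_top_iff_ne_top, not_not] using htop
  set F : E → ℝ≥0∞ := (Metric.ball (0:E) 1).indicator 1 with hFdef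
  have hFm : Measurable F := measurable_const.indicator measurableSet_ball
  have h1 := hμS F hFm
  have hlhs : ∫⁻ x, F x = volume (Metric.ball (0:E) 1) := by
    rw [hFdef, lintegral_indicator measurableSet_ball]
    simp
  have hfin : volume (Metric.ball (0:E) 1) < ⊤ := measure_ball_lt_top
  have hinner : ∀ q ∈ Set.Ioo (0:ℝ) 1,
      (∫⁻ ω, F (q • (ω : E)) ∂μS) * ENNReal.ofReal (q ^ 2) = ⊤ := by
    intro q hq
    have hval : ∀ ω : S, F (q • (ω : E)) = 1 := by
      intro ω
      have hω : ‖(ω : E)‖ = 1 := by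
        simpa using mem_sphere_zero_iff_norm.mp ω.2
      have : q • (ω : E) ∈ Metric.ball (0:E) 1 := by
        rw [mem_ball_zero_iff, norm_smul, hω, mul_one, Real.norm_eq_abs, abs_of_pos hq.1]
        exact hq.2
      simp [hFdef, Set.indicator_of_mem this]
    simp only [hval]
    rw [lintegral_one, hμtop, ENNReal.top_mul]
    exact (ENNReal.ofReal_pos.mpr (pow_pos hq.1 2)).ne'
  have htopint : ∫⁻ q in Set.Ioi (0:ℝ),
      (∫⁻ ω, F (q • (ω : E)) ∂μS) * ENNReal.ofReal (q ^ 2) = ⊤ := by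
    refine eq_top_iff.mpr ?_
    calc (⊤ : ℝ≥0∞)
        = ∫⁻ _ in Set.Ioo (0:ℝ) 1, ⊤ ∂volume := by
          rw [setLIntegral_const]
          simp [Real.volume_Ioo]
      _ = ∫⁻ q in Set.Ioo (0:ℝ) 1,
            (∫⁻ ω, F (q • (ω : E)) ∂μS) * ENNReal.ofReal (q ^ 2) ∂volume := by
          refine (setLIntegral_congr_fun measurableSet_Ioo ?_).symm
          exact hinner
      _ ≤ _ := lintegral_mono_set Set.Ioo_subset_Ioi_self
  rw [h1, htopint] at hlhs
  rw [← hlhs] at hfin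
  simp at hfin

lemma null_pos (μS : Measure S) [SFinite μS]
    (hμS : ∀ F : E → ℝ≥0∞, Measurable F →
      ∫⁻ x, F x = ∫⁻ q in Set.Ioi (0 : ℝ),
        (∫⁻ ω, F (q • (ω : E)) ∂μS) * ENNReal.ofReal (q ^ 2))
    {N : Set E} (hNm : MeasurableSet N) (hN : volume N = 0) :
    ((volume : Measure ℝ).prod μS) {p : ℝ × S | 0 < p.1 ∧ p.1 • (p.2 : E) ∈ N} = 0 := by
  have hFm : Measurable (N.indicator (1 : E → ℝ≥0∞)) := measurable_const.indicator hNm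
  have h0 : ∫⁻ p : ℝ × S, (if 0 < p.1 then (N.indicator (1 : E → ℝ≥0∞)) (p.1 • (p.2 : E)) *
      ENNReal.ofReal (p.1 ^ 2) else 0) ∂((volume : Measure ℝ).prod μS) = 0 := by
    rw [key_pos μS hμS hFm, lintegral_indicator hNm]
    simp [hN]
  have h2 := (lintegral_eq_zero_iff (meas_pos_integrand hFm)).mp h0
  refine measure_mono_null (fun p hp => ?_) (ae_iff.mp h2)
  obtain ⟨hp1, hp2⟩ := hp
  simp only [Set.mem_setOf_eq, Pi.zero_apply, if_pos hp1, Set.indicator_of_mem hp2,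
    Pi.one_apply, one_mul]
  exact (ENNReal.ofReal_pos.mpr (pow_pos hp1 2)).ne'

lemma null_neg (μS : Measure S) [SFinite μS]
    (hμS : ∀ F : E → ℝ≥0∞, Measurable F →
      ∫⁻ x, F x = ∫⁻ q in Set.Ioi (0 : ℝ),
        (∫⁻ ω, F (q • (ω : E)) ∂μS) * ENNReal.ofReal (q ^ 2))
    {N : Set E} (hNm : MeasurableSet N) (hN : volume N = 0) :
    ((volume : Measure ℝ).prod μS) {p : ℝ × S | p.1 < 0 ∧ (-p.1) • (p.2 : E) ∈ N} = 0 := by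
  have hFm : Measurable (N.indicator (1 : E → ℝ≥0∞)) := measurable_const.indicator hNm
  have hmm : Measurable fun p : ℝ × S =>
      (if p.1 < 0 then (N.indicator (1 : E → ℝ≥0∞)) ((-p.1) • (p.2 : E)) *
        ENNReal.ofReal (p.1 ^ 2) else 0) := by
    refine Measurable.ite (measurableSet_lt measurable_fst measurable_const)
      ((hFm.comp ((continuous_fst.neg.smul
        (continuous_subtype_val.comp continuous_snd)).measurable)).mul
      ((measurable_fst.pow_const 2).ennreal_ofReal)) measurable_const
  have h0 : ∫⁻ p : ℝ × S, (if p.1 < 0 then (N.indicator (1 : E → ℝ≥0∞)) ((-p.1) • (p.2 : E)) *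
      ENNReal.ofReal (p.1 ^ 2) else 0) ∂((volume : Measure ℝ).prod μS) = 0 := by
    rw [key_neg μS hμS hFm, lintegral_indicator hNm]
    simp [hN]
  have h2 := (lintegral_eq_zero_iff hmm).mp h0
  refine measure_mono_null (fun p hp => ?_) (ae_iff.mp h2)
  obtain ⟨hp1, hp2⟩ := hp
  simp only [Set.mem_setOf_eq, Pi.zero_apply, if_pos hp1, Set.indicator_of_mem hp2,
    Pi.one_apply, one_mul]
  have hps : (0:ℝ) < p.1 ^ 2 := by nlinarith
  exact (ENNReal.ofReal_pos.mpr hps).ne'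

end Stmt9Aux

namespace Stmt9Aux

lemma enn_sq (x : ℂ) : ((‖x‖₊ : ℝ≥0∞)) ^ 2 = ENNReal.ofReal (‖x‖ ^ 2) := by
  rw [ENNReal.ofReal_pow (norm_nonneg x), ofReal_norm]; rfl

lemma norm_exp_I (ζ : ℝ) : ‖Complex.exp (Complex.I * (ζ : ℂ))‖ = 1 := by
  rw [Complex.norm_exp]
  simp

open Classical in
noncomputable def nvec (x : E) : E := if x = 0 then (EuclideanSpace.single 0 1 : E) else ‖x‖⁻¹ • x

lemma nvec_norm (x : E) : ‖nvec x‖ = 1 := by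
  unfold nvec
  split
  · simp [EuclideanSpace.norm_single]
  · rename_i hx
    rw [norm_smul, norm_inv, norm_norm, inv_mul_cancel₀ (norm_ne_zero_iff.mpr hx)]

lemma measurable_nvec : Measurable nvec := by
  unfold nvec
  exact Measurable.ite measurableSet_eq measurable_const
    ((measurable_norm.inv).smul (measurable_id : Measurable fun x : E => x))

noncomputable def sp (x : E) : S :=
  ⟨nvec x, by rw [mem_sphere_zero_iff_norm]; exact nvec_norm x⟩

lemma measurable_sp : Measurable sp := measurable_nvec.subtype_mk

lemma smul_sphere_ne_zero {q : ℝ} (hq : q ≠ 0) (ω : S) : q • (ω : E) ≠ 0 := by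
  have hω : ‖(ω : E)‖ = 1 := mem_sphere_zero_iff_norm.mp ω.2
  intro hc
  apply hq
  have := congrArg norm hc
  rw [norm_smul, hω, mul_one, norm_zero, Real.norm_eq_abs, abs_eq_zero] at this
  exact this

lemma norm_smul_sphere {q : ℝ} (hq : 0 < q) (ω : S) : ‖q • (ω : E)‖ = q := by
  have hω : ‖(ω : E)‖ = 1 := mem_sphere_zero_iff_norm.mp ω.2
  rw [norm_smul, hω, mul_one, Real.norm_eq_abs, abs_of_pos hq]

lemma sp_smul {q : ℝ} (hq : 0 < q) (ω : S) : sp (q • (ω : E)) = ω := by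
  apply Subtype.ext
  show nvec (q • (ω : E)) = (ω : E)
  rw [nvec, if_neg (smul_sphere_ne_zero hq.ne' ω), norm_smul_sphere hq, smul_smul,
    inv_mul_cancel₀ hq.ne', one_smul]

lemma setOf_fst_eq_zero_null (μS : Measure S) [SFinite μS] :
    ((volume : Measure ℝ).prod μS) {p : ℝ × S | p.1 = 0} = 0 := by
  have : {p : ℝ × S | p.1 = 0} = ({0} : Set ℝ) ×ˢ (Set.univ : Set S) := by
    ext p
    simp only [Set.mem_setOf_eq, Set.mem_prod, Set.mem_singleton_iff, Set.mem_univ, and_true]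
  rw [this, Measure.prod_prod, Real.volume_singleton, zero_mul]

end Stmt9Aux

namespace Stmt9Aux

noncomputable def G (ζ : ℝ) (f g : E → ℂ) (p : ℝ × S) : ℂ :=
  if 0 < p.1 then (p.1 : ℂ) * f (p.1 • (p.2 : E))
  else (p.1 : ℂ) * Complex.exp (Complex.I * (ζ : ℂ)) * g ((-p.1) • (p.2 : E))

lemma measurable_G (ζ : ℝ) {f g : E → ℂ} (hfm : Measurable f) (hgm : Measurable g) :
    Measurable (G ζ f g) := by
  unfold G
  refine Measurable.ite (measurableSet_lt measurable_const measurable_fst) ?_ ?_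
  · exact (Complex.measurable_ofReal.comp measurable_fst).mul (hfm.comp measurable_smul2)
  · exact ((Complex.measurable_ofReal.comp measurable_fst).mul measurable_const).mul
      (hgm.comp ((continuous_fst.neg.smul
        (continuous_subtype_val.comp continuous_snd)).measurable))

lemma G_congr (ζ : ℝ) (μS : Measure S) [SFinite μS]
    (hμS : ∀ F : E → ℝ≥0∞, Measurable F →
      ∫⁻ x, F x = ∫⁻ q in Set.Ioi (0 : ℝ),
        (∫⁻ ω, F (q • (ω : E)) ∂μS) * ENNReal.ofReal (q ^ 2))
    {f f' g g' : E → ℂ} (hf : f =ᵐ[volume] f') (hg : g =ᵐ[volume] g') :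
    G ζ f g =ᵐ[(volume : Measure ℝ).prod μS] G ζ f' g' := by
  obtain ⟨Nf, hNfsub, hNfm, hNf0⟩ := exists_measurable_superset_of_null (ae_iff.mp hf)
  obtain ⟨Ng, hNgsub, hNgm, hNg0⟩ := exists_measurable_superset_of_null (ae_iff.mp hg)
  have key := measure_union_null (null_pos μS hμS hNfm hNf0) (null_neg μS hμS hNgm hNg0)
  refine measure_mono_null ?_ key
  intro p hp
  by_contra hnot
  simp only [Set.mem_union, Set.mem_setOf_eq, not_or, not_and] at hnot
  apply hp
  show G ζ f g p = G ζ f' g' p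
  simp only [G]
  rcases lt_trichotomy 0 p.1 with h|h|h
  · rw [if_pos h, if_pos h]
    have : f (p.1 • (p.2 : E)) = f' (p.1 • (p.2 : E)) := by
      by_contra hne
      exact hnot.1 h (hNfsub hne)
    rw [this]
  · rw [if_neg (by rw [← h]; exact lt_irrefl 0), if_neg (by rw [← h]; exact lt_irrefl 0)]
    rw [← h]
    simp
  · rw [if_neg (asymm h), if_neg (asymm h)]
    have : g ((-p.1) • (p.2 : E)) = g' ((-p.1) • (p.2 : E)) := by
      by_contra hne
      exact hnot.2 h (hNgsub hne)
    rw [this]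

lemma G_lintegral (ζ : ℝ) (μS : Measure S) [SFinite μS]
    (hμS : ∀ F : E → ℝ≥0∞, Measurable F →
      ∫⁻ x, F x = ∫⁻ q in Set.Ioi (0 : ℝ),
        (∫⁻ ω, F (q • (ω : E)) ∂μS) * ENNReal.ofReal (q ^ 2))
    {f g : E → ℂ} (hfm : Measurable f) (hgm : Measurable g) :
    ∫⁻ p, ((‖G ζ f g p‖₊ : ℝ≥0∞)) ^ 2 ∂((volume : Measure ℝ).prod μS)
      = (∫⁻ x, ((‖f x‖₊ : ℝ≥0∞)) ^ 2) + ∫⁻ x, ((‖g x‖₊ : ℝ≥0∞)) ^ 2 := by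
  have hFf : Measurable fun x : E => ((‖f x‖₊ : ℝ≥0∞)) ^ 2 := (hfm.enorm).pow_const 2
  have hFg : Measurable fun x : E => ((‖g x‖₊ : ℝ≥0∞)) ^ 2 := (hgm.enorm).pow_const 2
  have hpt : ∀ p : ℝ × S, ((‖G ζ f g p‖₊ : ℝ≥0∞)) ^ 2 =
      (if 0 < p.1 then ((‖f (p.1 • (p.2 : E))‖₊ : ℝ≥0∞)) ^ 2 * ENNReal.ofReal (p.1 ^ 2) else 0)
      + (if p.1 < 0 then ((‖g ((-p.1) • (p.2 : E))‖₊ : ℝ≥0∞)) ^ 2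
          * ENNReal.ofReal (p.1 ^ 2) else 0) := by
    intro p
    unfold G
    rcases lt_trichotomy 0 p.1 with h|h|h
    · rw [if_pos h, if_pos h, if_neg (asymm h), add_zero, enn_sq, enn_sq, norm_mul,
        Complex.norm_real, ← ENNReal.ofReal_mul (by positivity)]
      congr 1
      rw [mul_pow, Real.norm_eq_abs, sq_abs, mul_comm]
    · rw [if_neg (by rw [← h]; exact lt_irrefl 0), if_neg (by rw [← h]; exact lt_irrefl 0),
        if_neg (by rw [← h]; exact lt_irrefl 0), ← h]
      simp
    · rw [if_neg (asymm h), if_neg (asymm h), if_pos h, zero_add, enn_sq, enn_sq, norm_mul,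
        norm_mul, Complex.norm_real, norm_exp_I, mul_one,
        ← ENNReal.ofReal_mul (by positivity)]
      congr 1
      rw [mul_pow, Real.norm_eq_abs, sq_abs, mul_comm]
  calc ∫⁻ p, ((‖G ζ f g p‖₊ : ℝ≥0∞)) ^ 2 ∂((volume : Measure ℝ).prod μS)
      = ∫⁻ p : ℝ × S,
        ((if 0 < p.1 then ((‖f (p.1 • (p.2 : E))‖₊ : ℝ≥0∞)) ^ 2 * ENNReal.ofReal (p.1 ^ 2) else 0)
        + (if p.1 < 0 then ((‖g ((-p.1) • (p.2 : E))‖₊ : ℝ≥0∞)) ^ 2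
            * ENNReal.ofReal (p.1 ^ 2) else 0)) ∂((volume : Measure ℝ).prod μS) :=
        lintegral_congr hpt
    _ = _ := by
        rw [lintegral_add_left (meas_pos_integrand hFf), key_pos μS hμS hFf, key_neg μS hμS hFg]

lemma forward (ζ : ℝ) (μS : Measure S) [SFinite μS]
    (hμS : ∀ F : E → ℝ≥0∞, Measurable F →
      ∫⁻ x, F x = ∫⁻ q in Set.Ioi (0 : ℝ),
        (∫⁻ ω, F (q • (ω : E)) ∂μS) * ENNReal.ofReal (q ^ 2))
    {f g : E → ℂ} (hf : MemLp f 2 volume) (hg : MemLp g 2 volume) :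
    MemLp (G ζ f g) 2 ((volume : Measure ℝ).prod μS) ∧
    eLpNorm (G ζ f g) 2 ((volume : Measure ℝ).prod μS) ^ 2 =
      eLpNorm f 2 volume ^ 2 + eLpNorm g 2 volume ^ 2 := by
  obtain ⟨f', hf'm, hff'⟩ : ∃ f', StronglyMeasurable f' ∧ f =ᵐ[volume] f' :=
    ⟨hf.1.mk f, hf.1.stronglyMeasurable_mk, hf.1.ae_eq_mk⟩
  obtain ⟨g', hg'm, hgg'⟩ : ∃ g', StronglyMeasurable g' ∧ g =ᵐ[volume] g' :=
    ⟨hg.1.mk g, hg.1.stronglyMeasurable_mk, hg.1.ae_eq_mk⟩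
  have hae := G_congr ζ μS hμS hff' hgg'
  have hGm : Measurable (G ζ f' g') := measurable_G ζ hf'm.measurable hg'm.measurable
  have hint := G_lintegral ζ μS hμS hf'm.measurable hg'm.measurable
  have hsq : eLpNorm (G ζ f g) 2 ((volume : Measure ℝ).prod μS) ^ 2 =
      eLpNorm f 2 volume ^ 2 + eLpNorm g 2 volume ^ 2 := by
    rw [eLpNorm_congr_ae hae, sq_eLpNorm, hint, sq_eLpNorm, sq_eLpNorm]
    congr 1
    · exact (lintegral_congr_ae (hff'.mono fun x hx => by rw [hx])).symm
    · exact (lintegral_congr_ae (hgg'.mono fun x hx => by rw [hx])).symm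
  refine ⟨⟨hGm.stronglyMeasurable.aestronglyMeasurable.congr hae.symm, ?_⟩, hsq⟩
  have hfin : eLpNorm (G ζ f g) 2 ((volume : Measure ℝ).prod μS) ^ 2 < ⊤ := by
    rw [hsq]
    exact ENNReal.add_lt_top.mpr ⟨ENNReal.pow_lt_top hf.2, ENNReal.pow_lt_top hg.2⟩
  by_contra hc
  rw [not_lt, top_le_iff] at hc
  rw [hc] at hfin
  simp [ENNReal.top_pow] at hfin

end Stmt9Aux

namespace Stmt9Aux

lemma memLp_of_sq {α : Type*} [MeasurableSpace α] {μ : Measure α} {f : α → ℂ}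
    (hm : AEStronglyMeasurable f μ)
    (hfin : ∫⁻ x, ((‖f x‖₊ : ℝ≥0∞)) ^ 2 ∂μ < ⊤) : MemLp f 2 μ := by
  refine ⟨hm, ?_⟩
  rw [← sq_eLpNorm μ f] at hfin
  by_contra hc
  rw [not_lt, top_le_iff] at hc
  rw [hc] at hfin
  simp [ENNReal.top_pow] at hfin

lemma surj (ζ : ℝ) (μS : Measure S) [SFinite μS]
    (hμS : ∀ F : E → ℝ≥0∞, Measurable F →
      ∫⁻ x, F x = ∫⁻ q in Set.Ioi (0 : ℝ),
        (∫⁻ ω, F (q • (ω : E)) ∂μS) * ENNReal.ofReal (q ^ 2))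
    {h : ℝ × S → ℂ} (hh : MemLp h 2 ((volume : Measure ℝ).prod μS)) :
    ∃ f g : E → ℂ, MemLp f 2 volume ∧ MemLp g 2 volume ∧
      G ζ f g =ᵐ[(volume : Measure ℝ).prod μS] h := by
  classical
  obtain ⟨h', hh'm, hhh'⟩ : ∃ h', StronglyMeasurable h' ∧ h =ᵐ[(volume : Measure ℝ).prod μS] h' :=
    ⟨hh.1.mk h, hh.1.stronglyMeasurable_mk, hh.1.ae_eq_mk⟩
  set c : ℂ := Complex.exp (Complex.I * (ζ : ℂ)) with hc
  have hcne : c ≠ 0 := Complex.exp_ne_zero _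
  set f : E → ℂ := fun x => if x = 0 then 0 else ((‖x‖ : ℝ) : ℂ)⁻¹ * h' (‖x‖, sp x) with hfdef
  set g : E → ℂ := fun x =>
    if x = 0 then 0 else -c⁻¹ * (((‖x‖ : ℝ) : ℂ)⁻¹ * h' (-‖x‖, sp x)) with hgdef
  -- measurability
  have hfm : Measurable f :=
    Measurable.ite measurableSet_eq measurable_const
      ((Complex.measurable_ofReal.comp measurable_norm).inv.mul
        (hh'm.measurable.comp (measurable_norm.prodMk measurable_sp)))
  have hgm : Measurable g :=
    Measurable.ite measurableSet_eq measurable_const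
      (measurable_const.mul
        ((Complex.measurable_ofReal.comp measurable_norm).inv.mul
          (hh'm.measurable.comp (measurable_norm.neg.prodMk measurable_sp))))
  -- total L² mass of h'
  have hmeas2 : Measurable fun p : ℝ × S => ((‖h' p‖₊ : ℝ≥0∞)) ^ 2 :=
    hh'm.measurable.enorm.pow_const 2
  have htot : ∫⁻ p, ((‖h' p‖₊ : ℝ≥0∞)) ^ 2 ∂((volume : Measure ℝ).prod μS) < ⊤ := by
    rw [← sq_eLpNorm]
    have : eLpNorm h' 2 ((volume : Measure ℝ).prod μS) < ⊤ := by
      rw [← eLpNorm_congr_ae hhh']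
      exact hh.2
    exact ENNReal.pow_lt_top this
  set φ : ℝ → ℝ≥0∞ := fun s => ∫⁻ ω, ((‖h' (s, ω)‖₊ : ℝ≥0∞)) ^ 2 ∂μS with hφdef
  have hφm : Measurable φ := hmeas2.lintegral_prod_right'
  have hφtot : ∫⁻ s, φ s ∂(volume : Measure ℝ) < ⊤ := by
    rw [hφdef, ← lintegral_prod _ hmeas2.aemeasurable]
    exact htot
  have hφinner : ∀ q : ℝ, Measurable fun ω : S => ((‖h' (q, ω)‖₊ : ℝ≥0∞)) ^ 2 := fun q =>
    (hh'm.measurable.comp (measurable_const.prodMk measurable_id)).enorm.pow_const 2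
  have hφinner' : ∀ q : ℝ, Measurable fun ω : S => ((‖h' (-q, ω)‖₊ : ℝ≥0∞)) ^ 2 := fun q =>
    (hh'm.measurable.comp (measurable_const.prodMk measurable_id)).enorm.pow_const 2
  -- values of f and g on rays
  have hfval : ∀ q : ℝ, 0 < q → ∀ ω : S, f (q • (ω : E)) = ((q : ℝ) : ℂ)⁻¹ * h' (q, ω) := by
    intro q hq ω
    rw [hfdef]
    simp only
    rw [if_neg (smul_sphere_ne_zero hq.ne' ω), norm_smul_sphere hq ω, sp_smul hq ω]
  have hgval : ∀ q : ℝ, 0 < q → ∀ ω : S,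
      g (q • (ω : E)) = -c⁻¹ * (((q : ℝ) : ℂ)⁻¹ * h' (-q, ω)) := by
    intro q hq ω
    rw [hgdef]
    simp only
    rw [if_neg (smul_sphere_ne_zero hq.ne' ω), norm_smul_sphere hq ω, sp_smul hq ω]
  -- squared norms on rays
  have hfnorm : ∀ q : ℝ, 0 < q → ∀ ω : S, ((‖f (q • (ω : E))‖₊ : ℝ≥0∞)) ^ 2 =
      ENNReal.ofReal ((q ^ 2)⁻¹) * ((‖h' (q, ω)‖₊ : ℝ≥0∞)) ^ 2 := by
    intro q hq ω
    rw [hfval q hq ω, enn_sq, enn_sq, norm_mul, mul_pow, norm_inv, Complex.norm_real,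
      Real.norm_eq_abs, abs_of_pos hq, inv_pow, ENNReal.ofReal_mul (by positivity)]
  have hgnorm : ∀ q : ℝ, 0 < q → ∀ ω : S, ((‖g (q • (ω : E))‖₊ : ℝ≥0∞)) ^ 2 =
      ENNReal.ofReal ((q ^ 2)⁻¹) * ((‖h' (-q, ω)‖₊ : ℝ≥0∞)) ^ 2 := by
    intro q hq ω
    rw [hgval q hq ω, enn_sq, enn_sq, norm_mul, norm_mul, norm_neg, norm_inv, norm_exp_I,
      inv_one, one_mul, mul_pow, norm_inv, Complex.norm_real,
      Real.norm_eq_abs, abs_of_pos hq, inv_pow, ENNReal.ofReal_mul (by positivity)]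
  -- integrals of f and g
  have hFf : Measurable fun x : E => ((‖f x‖₊ : ℝ≥0∞)) ^ 2 := hfm.enorm.pow_const 2
  have hFg : Measurable fun x : E => ((‖g x‖₊ : ℝ≥0∞)) ^ 2 := hgm.enorm.pow_const 2
  have hIf : ∫⁻ x, ((‖f x‖₊ : ℝ≥0∞)) ^ 2 = ∫⁻ q in Set.Ioi (0 : ℝ), φ q := by
    rw [hμS _ hFf]
    refine setLIntegral_congr_fun measurableSet_Ioi (fun q hq => ?_)
    have hq : (0 : ℝ) < q := hq
    calc (∫⁻ ω, ((‖f (q • (ω : E))‖₊ : ℝ≥0∞)) ^ 2 ∂μS) * ENNReal.ofReal (q ^ 2)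
        = (ENNReal.ofReal ((q ^ 2)⁻¹) * ∫⁻ ω, ((‖h' (q, ω)‖₊ : ℝ≥0∞)) ^ 2 ∂μS)
            * ENNReal.ofReal (q ^ 2) := by
          rw [← lintegral_const_mul _ (hφinner q)]
          congr 1
          exact lintegral_congr fun ω => hfnorm q hq ω
      _ = φ q := by
          rw [mul_right_comm, ← ENNReal.ofReal_mul (by positivity),
            inv_mul_cancel₀ (by positivity : (q : ℝ) ^ 2 ≠ 0), ENNReal.ofReal_one, one_mul]
  have hIg : ∫⁻ x, ((‖g x‖₊ : ℝ≥0∞)) ^ 2 = ∫⁻ q in Set.Ioi (0 : ℝ), φ (-q) := by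
    rw [hμS _ hFg]
    refine setLIntegral_congr_fun measurableSet_Ioi (fun q hq => ?_)
    have hq : (0 : ℝ) < q := hq
    calc (∫⁻ ω, ((‖g (q • (ω : E))‖₊ : ℝ≥0∞)) ^ 2 ∂μS) * ENNReal.ofReal (q ^ 2)
        = (ENNReal.ofReal ((q ^ 2)⁻¹) * ∫⁻ ω, ((‖h' (-q, ω)‖₊ : ℝ≥0∞)) ^ 2 ∂μS)
            * ENNReal.ofReal (q ^ 2) := by
          rw [← lintegral_const_mul _ (hφinner' q)]
          congr 1
          exact lintegral_congr fun ω => hgnorm q hq ω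
      _ = φ (-q) := by
          rw [mul_right_comm, ← ENNReal.ofReal_mul (by positivity),
            inv_mul_cancel₀ (by positivity : (q : ℝ) ^ 2 ≠ 0), ENNReal.ofReal_one, one_mul]
  have hfin_f : ∫⁻ x, ((‖f x‖₊ : ℝ≥0∞)) ^ 2 < ⊤ := by
    rw [hIf]
    exact lt_of_le_of_lt (setLIntegral_le_lintegral _ _) hφtot
  have hIneg : ∫⁻ q in Set.Ioi (0 : ℝ), φ (-q) ∂(volume : Measure ℝ)
      = ∫⁻ s in Set.Iio (0 : ℝ), φ s ∂(volume : Measure ℝ) := by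
    have hpre : (Neg.neg : ℝ → ℝ) ⁻¹' (Set.Iio 0) = Set.Ioi 0 := by
      ext x
      simp [neg_lt_zero]
    rw [← hpre, MeasurePreserving.setLIntegral_comp_preimage_emb
      (Measure.measurePreserving_neg _) (Homeomorph.neg ℝ).measurableEmbedding]
  have hfin_g : ∫⁻ x, ((‖g x‖₊ : ℝ≥0∞)) ^ 2 < ⊤ := by
    rw [hIg, hIneg]
    exact lt_of_le_of_lt (setLIntegral_le_lintegral _ _) hφtot
  refine ⟨f, g, memLp_of_sq hfm.stronglyMeasurable.aestronglyMeasurable hfin_f,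
    memLp_of_sq hgm.stronglyMeasurable.aestronglyMeasurable hfin_g, ?_⟩
  have hGh' : G ζ f g =ᵐ[(volume : Measure ℝ).prod μS] h' := by
    refine measure_mono_null ?_ (setOf_fst_eq_zero_null μS)
    intro p hp
    by_contra hne
    apply hp
    show G ζ f g p = h' p
    replace hne : p.1 ≠ 0 := hne
    rcases lt_or_gt_of_ne hne with hlt|hgt
    · have ht : 0 < -p.1 := neg_pos.mpr hlt
      have heq := hgval (-p.1) ht p.2
      simp only [G, if_neg (asymm hlt)]
      rw [heq, neg_neg, Prod.mk.eta]
      have hpne : ((p.1 : ℝ) : ℂ) ≠ 0 := by exact_mod_cast hne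
      push_cast
      field_simp
      ring
    · have heq := hfval p.1 hgt p.2
      simp only [G, if_pos hgt]
      rw [heq, Prod.mk.eta, ← mul_assoc,
        mul_inv_cancel₀ (by exact_mod_cast hgt.ne' : ((p.1 : ℝ) : ℂ) ≠ 0), one_mul]
  exact hGh'.trans hhh'.symm

end Stmt9Aux

/-- The Jakšić–Pillet gluing map
`(f, g) ↦ h`, `h (s, ω) = s · f (s • ω)` for `s > 0` and `h (s, ω) = s · e^{iζ} · g ((-s) • ω)`
for `s < 0`, sends a pair of `L²` functions on `ℝ³` to an `L²` function on `ℝ × S²` with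
`‖h‖² = ‖f‖² + ‖g‖²`, and it is surjective onto `L² (ℝ × S²)`; hence it induces a unitary
`L²(ℝ³) ⊕ L²(ℝ³) → L²(ℝ × S²)`.  Here `μS` is the surface measure on the unit sphere `S²`,
characterized by the spherical-coordinates formula. -/
theorem stmt9 (ζ : ℝ)
    (μS : Measure (Metric.sphere (0 : EuclideanSpace ℝ (Fin 3)) 1))
    -- μS is the surface measure: ∫_{ℝ³} F = ∫_0^∞ ∫_{S²} F (q • ω) q² dμS(ω) dq
    (hμS : ∀ F : EuclideanSpace ℝ (Fin 3) → ℝ≥0∞, Measurable F →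
      ∫⁻ x, F x = ∫⁻ q in Set.Ioi (0 : ℝ),
        (∫⁻ ω, F (q • (ω : EuclideanSpace ℝ (Fin 3))) ∂μS) * ENNReal.ofReal (q ^ 2))
    -- the gluing map
    (glue : (EuclideanSpace ℝ (Fin 3) → ℂ) → (EuclideanSpace ℝ (Fin 3) → ℂ) →
      (ℝ × Metric.sphere (0 : EuclideanSpace ℝ (Fin 3)) 1) → ℂ)
    (hglue : ∀ f g p, glue f g p =
      if 0 < p.1 then (p.1 : ℂ) * f (p.1 • (p.2 : EuclideanSpace ℝ (Fin 3)))
      else (p.1 : ℂ) * Complex.exp (Complex.I * (ζ : ℂ)) *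
        g ((-p.1) • (p.2 : EuclideanSpace ℝ (Fin 3)))) :
    -- the glued function is L² with ‖h‖² = ‖f‖² + ‖g‖² (isometry on L² ⊕ L²)
    (∀ f g : EuclideanSpace ℝ (Fin 3) → ℂ,
      MemLp f 2 volume → MemLp g 2 volume →
      MemLp (glue f g) 2 (volume.prod μS) ∧
      eLpNorm (glue f g) 2 (volume.prod μS) ^ 2 =
        eLpNorm f 2 volume ^ 2 + eLpNorm g 2 volume ^ 2) ∧
    -- surjectivity onto L²(ℝ × S²)
    (∀ h : (ℝ × Metric.sphere (0 : EuclideanSpace ℝ (Fin 3)) 1) → ℂ,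
      MemLp h 2 (volume.prod μS) →
      ∃ f g : EuclideanSpace ℝ (Fin 3) → ℂ,
        MemLp f 2 volume ∧ MemLp g 2 volume ∧
        glue f g =ᵐ[volume.prod μS] h) := by
  haveI : IsFiniteMeasure μS := ⟨Stmt9Aux.muS_lt_top μS hμS⟩
  have hG : ∀ f g, glue f g = Stmt9Aux.G ζ f g := fun f g => funext fun p => by
    rw [hglue, Stmt9Aux.G]
  constructor
  · intro f g hf hg
    rw [hG]
    exact Stmt9Aux.forward ζ μS hμS hf hg
  · intro h hh
    obtain ⟨f, g, hf, hg, hae⟩ := Stmt9Aux.surj ζ μS hμS hh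
    exact ⟨f, g, hf, hg, by rw [hG]; exact hae⟩
end
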